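/- arXiv:1703.04773 — 5 statements merged into one kernel-verified Lean document; each statement's English description precedes it below -/
import Mathlib

section
/- The map P defined on entire functions by P(f)(z) = f(0)·f(z+1) is topologically mixing on H(ℂ): for all entire functions f, g and all ε > 0, R > 0, there exists N ∈ ℕ such that for every n ≥ N there is an entire function h with sup_{|z| ≤ R} |h(z) − f(z)| < ε and sup_{|z| ≤ R} |P^n(h)(z) − g(z)| < ε. -/
open Finset Complex

set_option linter.unnecessarySimpa false

noncomputable def Complex.abs : AbsoluteValue ℂ ℝ := NormedField.toAbsoluteValue ℂ

lemma Complex.norm_eq_abs (z : ℂ) : ‖z‖ = Complex.abs z := rfl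

@[simp] lemma Complex.abs_natCast (k : ℕ) : Complex.abs (k : ℂ) = k := by
  rw [← Complex.norm_eq_abs]; simp

@[simp] lemma Complex.abs_ofReal (r : ℝ) : Complex.abs (r : ℂ) = |r| := by
  rw [← Complex.norm_eq_abs]; simp

@[simp] lemma Complex.abs_ofNat (k : ℕ) [k.AtLeastTwo] :
    Complex.abs (no_index (OfNat.ofNat k : ℂ)) = OfNat.ofNat k := by
  rw [← Complex.norm_eq_abs]; simp

@[simp] lemma Complex.abs_two : Complex.abs 2 = 2 := by
  rw [← Complex.norm_eq_abs]; simp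

/-- The polynomial map `P(f)(z) = f(0) · f(z+1)` on functions `ℂ → ℂ`. -/
noncomputable def P (f : ℂ → ℂ) : ℂ → ℂ := fun z => f 0 * f (z + 1)

lemma two_pow_sum (m : ℕ) : ∑ j ∈ range m, 2^j = 2^m - 1 := by
  induction m with
  | zero => simp
  | succ m ih =>
    rw [Finset.sum_range_succ, ih]
    have : 1 ≤ 2^m := Nat.one_le_two_pow
    omega

lemma sum_exp_right (m n : ℕ) (h : m ≤ n) :
    ∑ k ∈ Finset.Ico (n-m) n, 2^(n-1-k) = 2^m - 1 := by
  rw [Finset.sum_Ico_eq_sum_range]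
  have h1 : n - (n - m) = m := by omega
  rw [h1]
  rw [← Finset.sum_range_reflect]
  rw [← two_pow_sum m]
  apply Finset.sum_congr rfl
  intro i hi
  simp only [Finset.mem_range] at hi
  congr 1
  omega

lemma P_iterate (h : ℂ → ℂ) (n : ℕ) (z : ℂ) :
    (P^[n] h) z = (∏ k ∈ range n, h k ^ (2^(n-1-k))) * h (z + n) := by
  induction n generalizing z with
  | zero => simp
  | succ n ih =>
    rw [Function.iterate_succ_apply']
    show (P^[n] h) 0 * (P^[n] h) (z + 1) = _
    rw [ih, ih]
    have hprod : ∏ k ∈ range (n+1), h k ^ (2^(n-k))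
        = ((∏ k ∈ range n, h k ^ (2^(n-1-k)))^2) * h n := by
      rw [Finset.prod_range_succ]
      have : ∀ k ∈ range n, h k ^ (2^(n-k)) = (h k ^ (2^(n-1-k)))^2 := by
        intro k hk
        simp only [Finset.mem_range] at hk
        rw [← pow_mul]
        congr 1
        have : n - k = (n - 1 - k) + 1 := by omega
        rw [this, pow_succ]
      rw [Finset.prod_congr rfl this, Finset.prod_pow]
      simp
    have he : ∀ k, n + 1 - 1 - k = n - k := by intro k; omega
    simp only [he]
    rw [hprod]
    push_cast
    generalize (∏ x ∈ range n, h ↑x ^ 2 ^ (n - 1 - x)) = Aq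
    ring

/-- The smoothstep polynomial. -/
noncomputable def qc : ℂ → ℂ := fun x => x^2 * (3 - 2*x)

lemma qc_one_sub (x : ℂ) : qc (1 - x) = 1 - qc x := by
  simp only [qc]; ring

lemma qc_diff : Differentiable ℂ qc := by
  unfold qc; fun_prop

lemma qc_iter_diff (K : ℕ) : Differentiable ℂ (qc^[K]) := by
  induction K with
  | zero => simpa using differentiable_id
  | succ K ih => rw [Function.iterate_succ]; exact ih.comp qc_diff

lemma qc_half {x : ℂ} (hx : Complex.abs x ≤ 1/8) : Complex.abs (qc x) ≤ Complex.abs x / 2 := by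
  have h1 : Complex.abs (qc x) = (Complex.abs x)^2 * Complex.abs (3 - 2*x) := by
    simp [qc, map_mul, map_pow]
  have h2 : Complex.abs (3 - 2*x) ≤ 13/4 := by
    have h3 : Complex.abs (3 - 2*x) ≤ Complex.abs (3:ℂ) + Complex.abs (2*x) := by
      simpa using Complex.abs.sub_le_add (3:ℂ) (2*x)
    have h4 : Complex.abs (2*x) = 2 * Complex.abs x := by
      rw [map_mul, Complex.abs_two]
    have h5 : Complex.abs (3:ℂ) = 3 := by norm_num
    rw [h4, h5] at h3
    linarith
  have h0 := Complex.abs.nonneg x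
  rw [h1]
  nlinarith [Complex.abs.nonneg (3 - 2*x)]

lemma qc_iter_small (K : ℕ) {x : ℂ} (hx : Complex.abs x ≤ 1/8) :
    Complex.abs (qc^[K] x) ≤ (1/2)^K * Complex.abs x := by
  induction K generalizing x with
  | zero => simp
  | succ K ih =>
    rw [Function.iterate_succ_apply]
    have h1 : Complex.abs (qc x) ≤ Complex.abs x / 2 := qc_half hx
    have h2 : Complex.abs (qc x) ≤ 1/8 := by nlinarith [Complex.abs.nonneg x]
    calc Complex.abs (qc^[K] (qc x)) ≤ (1/2)^K * Complex.abs (qc x) := ih h2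
      _ ≤ (1/2)^K * (Complex.abs x / 2) := by
          have : (0:ℝ) < (1/2)^K := by positivity
          nlinarith
      _ = (1/2)^(K+1) * Complex.abs x := by ring

lemma qc_iter_one_sub (K : ℕ) (x : ℂ) : qc^[K] (1 - x) = 1 - qc^[K] x := by
  induction K generalizing x with
  | zero => simp
  | succ K ih =>
    rw [Function.iterate_succ_apply, Function.iterate_succ_apply, qc_one_sub, ih]

lemma prod_near_one {ι : Type*} (s : Finset ι) (x : ι → ℂ) (δ : ℝ) (hδ : 0 ≤ δ)
    (hx : ∀ i ∈ s, Complex.abs (x i - 1) ≤ δ) (hs : (s.card : ℝ) * δ ≤ 1/2) :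
    Complex.abs (∏ i ∈ s, x i - 1) ≤ 2 * ((s.card : ℝ) * δ) := by
  classical
  induction s using Finset.cons_induction with
  | empty => simp
  | cons a s ha ih =>
    rw [Finset.prod_cons]
    have hcard : ((Finset.cons a s ha).card : ℝ) = s.card + 1 := by
      rw [Finset.card_cons]; push_cast; ring
    rw [hcard] at hs ⊢
    have hs' : (s.card : ℝ) * δ ≤ 1/2 := by nlinarith [Nat.cast_nonneg (α := ℝ) s.card]
    have ih' := ih (fun i hi => hx i (Finset.mem_cons.mpr (Or.inr hi))) hs'
    have hxa : Complex.abs (x a - 1) ≤ δ := hx a (Finset.mem_cons_self a s)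
    have hxabs : Complex.abs (x a) ≤ 1 + δ := by
      calc Complex.abs (x a) = Complex.abs ((x a - 1) + 1) := by ring_nf
        _ ≤ Complex.abs (x a - 1) + 1 := by simpa using Complex.abs.add_le (x a - 1) 1
        _ ≤ 1 + δ := by linarith
    have key : x a * ∏ i ∈ s, x i - 1 = x a * (∏ i ∈ s, x i - 1) + (x a - 1) := by ring
    rw [key]
    calc Complex.abs (x a * (∏ i ∈ s, x i - 1) + (x a - 1))
        ≤ Complex.abs (x a) * Complex.abs (∏ i ∈ s, x i - 1) + Complex.abs (x a - 1) := by
          simpa [map_mul] using Complex.abs.add_le (x a * (∏ i ∈ s, x i - 1)) (x a - 1)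
      _ ≤ (1 + δ) * (2 * ((s.card:ℝ) * δ)) + δ := by
          have h0 := Complex.abs.nonneg (∏ i ∈ s, x i - 1)
          nlinarith [Complex.abs.nonneg (x a)]
      _ ≤ 2 * (((s.card:ℝ) + 1) * δ) := by nlinarith [Nat.cast_nonneg (α := ℝ) s.card]

lemma pow_sub_pow_est (x y : ℂ) (B : ℝ) (hB : 1 ≤ B) (hx : Complex.abs x ≤ B)
    (hy : Complex.abs y ≤ B) (e : ℕ) :
    Complex.abs (x^e - y^e) ≤ (e : ℝ) * B^e * Complex.abs (x - y) := by
  have key := geom_sum₂_mul x y e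
  rw [← key, map_mul]
  have hsum : Complex.abs (∑ i ∈ range e, x ^ i * y ^ (e - 1 - i)) ≤ (e : ℝ) * B^e := by
    calc Complex.abs (∑ i ∈ range e, x ^ i * y ^ (e - 1 - i))
        ≤ ∑ i ∈ range e, Complex.abs (x ^ i * y ^ (e - 1 - i)) := by
          simpa using Complex.abs.sum_le (range e) (fun i => x ^ i * y ^ (e - 1 - i))
      _ ≤ ∑ i ∈ range e, B^e := by
          apply Finset.sum_le_sum
          intro i hi
          simp only [Finset.mem_range] at hi
          rw [map_mul, map_pow, map_pow]
          have hb0 : (0:ℝ) ≤ B := by linarith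
          calc Complex.abs x ^ i * Complex.abs y ^ (e-1-i) ≤ B ^ i * B ^ (e-1-i) := by
                apply mul_le_mul (pow_le_pow_left₀ (Complex.abs.nonneg x) hx i)
                  (pow_le_pow_left₀ (Complex.abs.nonneg y) hy (e-1-i))
                  (by positivity) (by positivity)
            _ = B ^ (i + (e-1-i)) := by rw [pow_add]
            _ ≤ B ^ e := pow_le_pow_right₀ hB (by omega)
      _ = (e : ℝ) * B^e := by rw [Finset.sum_const, Finset.card_range, nsmul_eq_mul]
  have h0 := Complex.abs.nonneg (x - y)
  nlinarith [Complex.abs.nonneg (∑ i ∈ range e, x ^ i * y ^ (e - 1 - i))]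

lemma prod_pow_diff (x t : ℕ → ℂ) (e : ℕ → ℕ) (B δ : ℝ) (hB : 1 ≤ B) (hδ0 : 0 ≤ δ)
    (hδ1 : δ ≤ 1) :
    ∀ n, (∀ k < n, Complex.abs (x k - t k) ≤ δ) → (∀ k < n, Complex.abs (t k) ≤ B) →
    Complex.abs (∏ k ∈ range n, x k ^ e k - ∏ k ∈ range n, t k ^ e k)
      ≤ δ * (∑ k ∈ range n, (e k : ℝ)) * (B+1)^(2 * ∑ k ∈ range n, e k) := by
  intro n
  induction n with
  | zero => simp
  | succ n ih =>
    intro hx ht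
    have hx' : ∀ k < n, Complex.abs (x k - t k) ≤ δ := fun k hk => hx k (by omega)
    have ht' : ∀ k < n, Complex.abs (t k) ≤ B := fun k hk => ht k (by omega)
    have IH := ih hx' ht'
    rw [Finset.prod_range_succ, Finset.prod_range_succ]
    have hxb : ∀ k < n+1, Complex.abs (x k) ≤ B + 1 := by
      intro k hk
      calc Complex.abs (x k) = Complex.abs ((x k - t k) + t k) := by ring_nf
        _ ≤ Complex.abs (x k - t k) + Complex.abs (t k) := Complex.abs.add_le _ _
        _ ≤ δ + B := by have := hx k hk; have := ht k hk; linarith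
        _ ≤ B + 1 := by linarith
    set U := ∏ k ∈ range n, x k ^ e k with hU
    set V := ∏ k ∈ range n, t k ^ e k with hV
    set E : ℕ := ∑ k ∈ range n, e k with hE
    have hB1 : (1:ℝ) ≤ B + 1 := by linarith
    have hUb : Complex.abs U ≤ (B+1)^E := by
      rw [hU, hE, map_prod]
      calc ∏ k ∈ range n, Complex.abs (x k ^ e k) ≤ ∏ k ∈ range n, (B+1)^(e k) := by
            apply Finset.prod_le_prod
            · intro i _; positivity
            · intro i hi
              rw [map_pow]
              exact pow_le_pow_left₀ (Complex.abs.nonneg _) (hxb i (by simp at hi; omega)) _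
        _ = (B+1)^(∑ k ∈ range n, e k) := by rw [Finset.prod_pow_eq_pow_sum]
    have hVnb : Complex.abs (t n ^ e n) ≤ (B+1)^(e n) := by
      rw [map_pow]
      exact pow_le_pow_left₀ (Complex.abs.nonneg _) (by have := ht n (by omega); linarith) _
    have hdiff : Complex.abs (x n ^ e n - t n ^ e n) ≤ (e n : ℝ) * (B+1)^(e n) * δ := by
      have := pow_sub_pow_est (x n) (t n) (B+1) hB1 (hxb n (by omega))
        (by have := ht n (by omega); linarith) (e n)
      calc Complex.abs (x n ^ e n - t n ^ e n)
          ≤ (e n : ℝ) * (B+1)^(e n) * Complex.abs (x n - t n) := this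
        _ ≤ (e n : ℝ) * (B+1)^(e n) * δ := by
            apply mul_le_mul_of_nonneg_left (hx n (by omega)); positivity
    have key : U * x n ^ e n - V * t n ^ e n
        = U * (x n ^ e n - t n ^ e n) + (U - V) * t n ^ e n := by ring
    rw [key]
    have step : Complex.abs (U * (x n ^ e n - t n ^ e n) + (U - V) * t n ^ e n)
        ≤ Complex.abs U * Complex.abs (x n ^ e n - t n ^ e n)
          + Complex.abs (U - V) * Complex.abs (t n ^ e n) := by
      calc Complex.abs (U * (x n ^ e n - t n ^ e n) + (U - V) * t n ^ e n)
          ≤ Complex.abs (U * (x n ^ e n - t n ^ e n)) + Complex.abs ((U - V) * t n ^ e n) :=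
            Complex.abs.add_le _ _
        _ = _ := by rw [map_mul, map_mul]
    have hsum : ∑ k ∈ range (n+1), (e k : ℝ) = (∑ k ∈ range n, (e k:ℝ)) + e n := by
      rw [Finset.sum_range_succ]
    have hsumN : ∑ k ∈ range (n+1), e k = E + e n := by rw [hE, Finset.sum_range_succ]
    rw [hsum, hsumN]
    have hp1 : Complex.abs U * Complex.abs (x n ^ e n - t n ^ e n)
        ≤ (B+1)^E * ((e n : ℝ) * (B+1)^(e n) * δ) := by
      apply mul_le_mul hUb hdiff (Complex.abs.nonneg _) (by positivity)
    have hp2 : Complex.abs (U - V) * Complex.abs (t n ^ e n)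
        ≤ (δ * (∑ k ∈ range n, (e k:ℝ)) * (B+1)^(2*E)) * (B+1)^(e n) := by
      apply mul_le_mul IH hVnb (Complex.abs.nonneg _) (by positivity)
    have hmono : ∀ a b : ℕ, a ≤ b → (B+1)^a ≤ (B+1)^b := fun a b hab => pow_le_pow_right₀ hB1 hab
    have h1 : (B+1)^E * ((e n : ℝ) * (B+1)^(e n) * δ) ≤ δ * (e n : ℝ) * (B+1)^(2*(E + e n)) := by
      have : (B+1)^E * (B+1)^(e n) ≤ (B+1)^(2*(E+e n)) := by
        rw [← pow_add]; exact hmono _ _ (by omega)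
      calc (B+1)^E * ((e n : ℝ) * (B+1)^(e n) * δ)
          = (δ * (e n : ℝ)) * ((B+1)^E * (B+1)^(e n)) := by ring
        _ ≤ (δ * (e n : ℝ)) * (B+1)^(2*(E+e n)) :=
            mul_le_mul_of_nonneg_left this (by positivity)
        _ = δ * (e n : ℝ) * (B+1)^(2*(E + e n)) := by ring
    have h2 : (δ * (∑ k ∈ range n, (e k:ℝ)) * (B+1)^(2*E)) * (B+1)^(e n)
        ≤ δ * (∑ k ∈ range n, (e k:ℝ)) * (B+1)^(2*(E+e n)) := by
      have : (B+1)^(2*E) * (B+1)^(e n) ≤ (B+1)^(2*(E+e n)) := by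
        rw [← pow_add]; exact hmono _ _ (by omega)
      have hsum0 : (0:ℝ) ≤ ∑ k ∈ range n, (e k:ℝ) :=
        Finset.sum_nonneg (fun i _ => Nat.cast_nonneg _)
      calc (δ * (∑ k ∈ range n, (e k:ℝ)) * (B+1)^(2*E)) * (B+1)^(e n)
          = (δ * (∑ k ∈ range n, (e k:ℝ))) * ((B+1)^(2*E) * (B+1)^(e n)) := by ring
        _ ≤ (δ * (∑ k ∈ range n, (e k:ℝ))) * (B+1)^(2*(E+e n)) :=
            mul_le_mul_of_nonneg_left this (by positivity)
        _ = δ * (∑ k ∈ range n, (e k:ℝ)) * (B+1)^(2*(E+e n)) := by ring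
    calc Complex.abs (U * (x n ^ e n - t n ^ e n) + (U - V) * t n ^ e n)
        ≤ Complex.abs U * Complex.abs (x n ^ e n - t n ^ e n)
          + Complex.abs (U - V) * Complex.abs (t n ^ e n) := step
      _ ≤ (B+1)^E * ((e n : ℝ) * (B+1)^(e n) * δ)
          + (δ * (∑ k ∈ range n, (e k:ℝ)) * (B+1)^(2*E)) * (B+1)^(e n) := by linarith
      _ ≤ δ * (e n : ℝ) * (B+1)^(2*(E + e n))
          + δ * (∑ k ∈ range n, (e k:ℝ)) * (B+1)^(2*(E+e n)) := by linarith
      _ = δ * ((∑ k ∈ range n, (e k:ℝ)) + (e n : ℝ)) * (B+1)^(2*(E + e n)) := by ring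

lemma exists_shift (S : Finset ℂ) (ε : ℝ) (hε : 0 < ε) :
    ∃ a : ℂ, Complex.abs a < ε ∧ ∀ s ∈ S, s + a ≠ 0 := by
  have hinf : (Set.Ioo (0:ℝ) ε).Infinite := Set.Ioo_infinite hε
  have hinf2 : ((fun t : ℝ => (t:ℂ)) '' Set.Ioo 0 ε).Infinite :=
    hinf.image (Complex.ofReal_injective.injOn)
  obtain ⟨a, ha, hna⟩ := hinf2.exists_notMem_finset (S.image (fun s => -s))
  obtain ⟨t, ht, rfl⟩ := ha
  refine ⟨t, ?_, ?_⟩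
  · rw [Complex.abs_ofReal, abs_of_pos ht.1]; exact ht.2
  · intro s hs hcontra
    apply hna
    rw [Finset.mem_image]
    exact ⟨s, hs, by linear_combination -hcontra⟩

lemma diff_finset_prod {ι : Type*} (s : Finset ι) (F : ι → ℂ → ℂ)
    (h : ∀ i ∈ s, Differentiable ℂ (F i)) :
    Differentiable ℂ (fun z => ∏ i ∈ s, F i z) := by
  classical
  induction s using Finset.cons_induction with
  | empty => simpa using differentiable_const (1:ℂ)
  | cons a s ha ih =>
    simp only [Finset.prod_cons]
    exact (h a (Finset.mem_cons_self a s)).mul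
      (ih (fun i hi => h i (Finset.mem_cons.mpr (Or.inr hi))))

lemma bound_on_ball (F : ℂ → ℂ) (hF : Differentiable ℂ F) (c : ℂ) (r : ℝ) :
    ∃ M : ℝ, 1 ≤ M ∧ ∀ z ∈ Metric.closedBall c r, Complex.abs (F z) ≤ M := by
  obtain ⟨M, hM⟩ := (isCompact_closedBall c r).exists_bound_of_continuousOn
    hF.continuous.continuousOn
  refine ⟨max M 1, le_max_right _ _, fun z hz => ?_⟩
  calc Complex.abs (F z) = ‖F z‖ := (Complex.norm_eq_abs _).symm
    _ ≤ M := hM z hz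
    _ ≤ max M 1 := le_max_left _ _

set_option maxHeartbeats 2000000 in
lemma bump (m n : ℕ) (hm : 1 ≤ m) (hn : 24*m ≤ n) (θ : ℝ) (hθ : 0 < θ) :
    ∃ Φ Ψ : ℂ → ℂ, Differentiable ℂ Φ ∧ Differentiable ℂ Ψ ∧
      (∀ z : ℂ, Complex.abs z ≤ m → Complex.abs (Φ z - 1) ≤ θ ∧ Complex.abs (Ψ z) ≤ θ) ∧
      (∀ z : ℂ, Complex.abs (z - n) ≤ m → Complex.abs (Φ z) ≤ θ ∧ Complex.abs (Ψ z - 1) ≤ θ) ∧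
      (∀ k : ℕ, k ∈ Finset.Ico (m+1) (n-m) → Φ (k:ℂ) = 0 ∧ Ψ (k:ℂ) = 0) := by
  have hθ' : 0 < min θ 1 := lt_min hθ one_pos
  set θ' := min θ 1 with hθ'def
  have hθ'le : θ' ≤ θ := min_le_left _ _
  have hθ'1 : θ' ≤ 1 := min_le_right _ _
  -- basic numerics
  have hn0 : 0 < n := by omega
  have hnR : (0:ℝ) < n := by exact_mod_cast hn0
  have hmn : (m:ℝ)/(n:ℝ) ≤ 1/24 := by
    rw [div_le_div_iff₀ hnR (by norm_num)]
    have : (24:ℝ)*m ≤ n := by exact_mod_cast hn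
    linarith
  have hm0 : (0:ℝ) < m := by exact_mod_cast hm
  -- choose J
  set ρ : ℝ := (m:ℝ)/((m:ℝ)+1) with hρdef
  have hρ0 : 0 ≤ ρ := by positivity
  have hρ1 : ρ < 1 := by
    rw [hρdef, div_lt_one (by linarith)]; linarith
  obtain ⟨J, hJ⟩ := exists_pow_lt_of_lt_one
    (show (0:ℝ) < θ'/(9*((n:ℝ)+1)) by positivity) hρ1
  -- middle factors
  set mid : Finset ℕ := Finset.Ico (m+1) (n-m) with hmiddef
  have hmem : ∀ k ∈ mid, m+1 ≤ k ∧ k + m + 1 ≤ n := by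
    intro k hk
    rw [hmiddef, Finset.mem_Ico] at hk
    omega
  set Φ₀ : ℂ → ℂ := fun z => ∏ k ∈ mid, (1 - (z/(k:ℂ))^J) with hΦ₀
  set Ψ₀ : ℂ → ℂ := fun z => ∏ k ∈ mid, (1 - (((n:ℂ) - z)/((n:ℂ) - (k:ℂ)))^J) with hΨ₀
  have hΦ₀diff : Differentiable ℂ Φ₀ :=
    diff_finset_prod _ _ (fun i _ => by fun_prop)
  have hΨ₀diff : Differentiable ℂ Ψ₀ :=
    diff_finset_prod _ _ (fun i _ => by fun_prop)
  have hcard : ((mid.card : ℝ)) ≤ n := by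
    have : mid.card ≤ n := by
      rw [hmiddef, Nat.card_Ico]; omega
    exact_mod_cast this
  have hJnn : 0 ≤ ρ^J := by positivity
  have hcard_bound : (mid.card : ℝ) * ρ^J ≤ θ'/9 := by
    calc (mid.card : ℝ) * ρ^J ≤ ((n:ℝ)+1) * (θ'/(9*((n:ℝ)+1))) := by
          apply mul_le_mul (by linarith) (le_of_lt hJ) hJnn (by linarith)
      _ = θ'/9 := by field_simp
  have hhalf : (mid.card : ℝ) * ρ^J ≤ 1/2 := by linarith
  -- cast helper
  have hkcast : ∀ k ∈ mid, (n:ℂ) - (k:ℂ) = ((n - k : ℕ) : ℂ) ∧ (m:ℝ)+1 ≤ ((n-k:ℕ):ℝ) := by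
    intro k hk
    obtain ⟨h1, h2⟩ := hmem k hk
    constructor
    · push_cast [Nat.cast_sub (by omega : k ≤ n)]; ring
    · have : m+1 ≤ n - k := by omega
      exact_mod_cast this
  -- Φ₀ near 1 on small disk
  have hΦ₀near : ∀ z : ℂ, Complex.abs z ≤ m → Complex.abs (Φ₀ z - 1) ≤ 2*θ'/9 := by
    intro z hz
    have := prod_near_one mid (fun k => 1 - (z/(k:ℂ))^J) (ρ^J) hJnn ?_ hhalf
    · calc Complex.abs (Φ₀ z - 1) ≤ 2 * ((mid.card:ℝ) * ρ^J) := this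
        _ ≤ 2*θ'/9 := by linarith
    · intro k hk
      obtain ⟨h1, _⟩ := hmem k hk
      have hk1 : (m:ℝ)+1 ≤ (k:ℝ) := by exact_mod_cast h1
      have hk0 : (0:ℝ) < (k:ℝ) := by linarith
      simp only [sub_sub_cancel_left, map_neg_eq_map, map_pow]
      rw [map_div₀]
      have habs : Complex.abs z / Complex.abs (k:ℂ) ≤ ρ := by
        rw [Complex.abs_natCast]
        rw [div_le_iff₀ hk0, hρdef]
        rw [div_mul_eq_mul_div, le_div_iff₀ (by linarith : (0:ℝ) < (m:ℝ)+1)]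
        nlinarith
      calc (Complex.abs z / Complex.abs (k:ℂ))^J ≤ ρ^J :=
            pow_le_pow_left₀ (by positivity) habs J
        _ ≤ ρ^J := le_refl _
  -- Ψ₀ near 1 on far disk
  have hΨ₀near : ∀ z : ℂ, Complex.abs (z - n) ≤ m → Complex.abs (Ψ₀ z - 1) ≤ 2*θ'/9 := by
    intro z hz
    have := prod_near_one mid (fun k => 1 - (((n:ℂ) - z)/((n:ℂ) - (k:ℂ)))^J) (ρ^J) hJnn ?_ hhalf
    · calc Complex.abs (Ψ₀ z - 1) ≤ 2 * ((mid.card:ℝ) * ρ^J) := this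
        _ ≤ 2*θ'/9 := by linarith
    · intro k hk
      obtain ⟨hcastk, hk1⟩ := hkcast k hk
      have hk0 : (0:ℝ) < ((n-k:ℕ):ℝ) := by linarith
      simp only [sub_sub_cancel_left, map_neg_eq_map, map_pow]
      rw [map_div₀]
      have hnz : Complex.abs ((n:ℂ) - z) ≤ m := by
        rw [← Complex.abs.map_neg]; simpa [neg_sub] using hz
      have habs : Complex.abs ((n:ℂ) - z) / Complex.abs ((n:ℂ) - (k:ℂ)) ≤ ρ := by
        rw [hcastk, Complex.abs_natCast]
        rw [div_le_iff₀ hk0, hρdef]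
        rw [div_mul_eq_mul_div, le_div_iff₀ (by linarith : (0:ℝ) < (m:ℝ)+1)]
        nlinarith
      calc (Complex.abs ((n:ℂ) - z) / Complex.abs ((n:ℂ) - (k:ℂ)))^J ≤ ρ^J :=
            pow_le_pow_left₀ (by positivity) habs J
        _ ≤ ρ^J := le_refl _
  -- bounds on the other disks
  obtain ⟨M₁, hM₁1, hM₁⟩ := bound_on_ball Ψ₀ hΨ₀diff 0 m
  obtain ⟨M₂, hM₂1, hM₂⟩ := bound_on_ball Φ₀ hΦ₀diff (n:ℂ) m
  -- choose K
  obtain ⟨K, hK⟩ := exists_pow_lt_of_lt_one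
    (show (0:ℝ) < θ'/(8*(M₁+M₂+1)) by positivity) (show (1:ℝ)/2 < 1 by norm_num)
  have hKnn : (0:ℝ) ≤ (1/2:ℝ)^K := by positivity
  have hKle : ((1:ℝ)/2)^K ≤ θ'/(8*(M₁+M₂+1)) := le_of_lt hK
  have hMsum : (0:ℝ) < M₁+M₂+1 := by linarith
  have hK1 : ((1:ℝ)/2)^K ≤ θ'/8 := by
    have h8 : θ'/(8*(M₁+M₂+1)) ≤ θ'/8 :=
      div_le_div_of_nonneg_left (le_of_lt hθ') (by norm_num) (by linarith)
    linarith
  -- the cutoff functions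
  set χ₁ : ℂ → ℂ := fun z => qc^[K] ((1 - z/(n:ℂ))^2) with hχ₁
  set χ₂ : ℂ → ℂ := fun z => qc^[K] ((z/(n:ℂ))^2) with hχ₂
  have hχ₁diff : Differentiable ℂ χ₁ := (qc_iter_diff K).comp (by fun_prop)
  have hχ₂diff : Differentiable ℂ χ₂ := (qc_iter_diff K).comp (by fun_prop)
  -- estimates on the near disk
  have hw_near : ∀ z : ℂ, Complex.abs z ≤ m → Complex.abs (z/(n:ℂ)) ≤ 1/24 := by
    intro z hz
    rw [map_div₀, Complex.abs_natCast]
    calc Complex.abs z / (n:ℝ) ≤ (m:ℝ)/(n:ℝ) := by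
          gcongr
      _ ≤ 1/24 := hmn
  have hb2small : ∀ x : ℂ, Complex.abs x ≤ 1/24 → Complex.abs (x^2) ≤ 1/8 := by
    intro x hx
    rw [map_pow]
    nlinarith [Complex.abs.nonneg x]
  have hb1small : ∀ x : ℂ, Complex.abs x ≤ 1/24 → Complex.abs (1 - (1-x)^2) ≤ 1/8 := by
    intro x hx
    have key : 1 - (1-x)^2 = x * (2 - x) := by ring
    rw [key, map_mul]
    have h2 : Complex.abs (2 - x) ≤ 2 + 1/24 := by
      calc Complex.abs (2 - x) ≤ Complex.abs 2 + Complex.abs x := Complex.abs.sub_le_add _ _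
        _ ≤ 2 + 1/24 := by rw [Complex.abs_two]; linarith
    nlinarith [Complex.abs.nonneg x, Complex.abs.nonneg (2 - x)]
  have hw_far : ∀ z : ℂ, Complex.abs (z - n) ≤ m → Complex.abs (1 - z/(n:ℂ)) ≤ 1/24 := by
    intro z hz
    have hne : (n:ℂ) ≠ 0 := Nat.cast_ne_zero.mpr (by omega)
    have key : (1 : ℂ) - z/(n:ℂ) = ((n:ℂ) - z)/(n:ℂ) := by
      field_simp
    rw [key, map_div₀, Complex.abs_natCast]
    have hnz : Complex.abs ((n:ℂ) - z) ≤ m := by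
      rw [← map_neg_eq_map Complex.abs, neg_sub]; exact hz
    calc Complex.abs ((n:ℂ) - z) / (n:ℝ) ≤ (m:ℝ)/(n:ℝ) := by gcongr
      _ ≤ 1/24 := hmn
  -- χ₁ near 1 on near disk
  have hχ₁near : ∀ z : ℂ, Complex.abs z ≤ m → Complex.abs (χ₁ z - 1) ≤ (1/2:ℝ)^K := by
    intro z hz
    have hb := hb1small (z/(n:ℂ)) (hw_near z hz)
    have key : χ₁ z - 1 = -(qc^[K] (1 - (1 - z/(n:ℂ))^2)) := by
      rw [hχ₁, qc_iter_one_sub]; ring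
    rw [key, map_neg_eq_map]
    calc Complex.abs (qc^[K] (1 - (1 - z/(n:ℂ))^2))
        ≤ (1/2:ℝ)^K * Complex.abs (1 - (1 - z/(n:ℂ))^2) := qc_iter_small K hb
      _ ≤ (1/2:ℝ)^K * 1 := by nlinarith [Complex.abs.nonneg (1 - (1 - z/(n:ℂ))^2)]
      _ = (1/2:ℝ)^K := mul_one _
  have hχ₂near : ∀ z : ℂ, Complex.abs z ≤ m → Complex.abs (χ₂ z) ≤ (1/2:ℝ)^K := by
    intro z hz
    have hb := hb2small (z/(n:ℂ)) (hw_near z hz)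
    calc Complex.abs (qc^[K] ((z/(n:ℂ))^2))
        ≤ (1/2:ℝ)^K * Complex.abs ((z/(n:ℂ))^2) := qc_iter_small K hb
      _ ≤ (1/2:ℝ)^K * 1 := by nlinarith [Complex.abs.nonneg ((z/(n:ℂ))^2)]
      _ = (1/2:ℝ)^K := mul_one _
  have hχ₁far : ∀ z : ℂ, Complex.abs (z - n) ≤ m → Complex.abs (χ₁ z) ≤ (1/2:ℝ)^K := by
    intro z hz
    have hb := hb2small (1 - z/(n:ℂ)) (hw_far z hz)
    calc Complex.abs (qc^[K] ((1 - z/(n:ℂ))^2))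
        ≤ (1/2:ℝ)^K * Complex.abs ((1 - z/(n:ℂ))^2) := qc_iter_small K hb
      _ ≤ (1/2:ℝ)^K * 1 := by nlinarith [Complex.abs.nonneg ((1 - z/(n:ℂ))^2)]
      _ = (1/2:ℝ)^K := mul_one _
  have hχ₂far : ∀ z : ℂ, Complex.abs (z - n) ≤ m → Complex.abs (χ₂ z - 1) ≤ (1/2:ℝ)^K := by
    intro z hz
    have hwf := hw_far z hz
    have hb : Complex.abs (1 - (z/(n:ℂ))^2) ≤ 1/8 := by
      have key : 1 - (z/(n:ℂ))^2 = (1 - z/(n:ℂ)) * (2 - (1 - z/(n:ℂ))) := by ring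
      rw [key, map_mul]
      have h2 : Complex.abs (2 - (1 - z/(n:ℂ))) ≤ 2 + 1/24 := by
        calc Complex.abs (2 - (1 - z/(n:ℂ)))
            ≤ Complex.abs 2 + Complex.abs (1 - z/(n:ℂ)) := Complex.abs.sub_le_add _ _
          _ ≤ 2 + 1/24 := by rw [Complex.abs_two]; linarith
      nlinarith [Complex.abs.nonneg (1 - z/(n:ℂ)), Complex.abs.nonneg (2 - (1 - z/(n:ℂ)))]
    have key : χ₂ z - 1 = -(qc^[K] (1 - (z/(n:ℂ))^2)) := by
      rw [hχ₂, qc_iter_one_sub]; ring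
    rw [key, map_neg_eq_map]
    calc Complex.abs (qc^[K] (1 - (z/(n:ℂ))^2))
        ≤ (1/2:ℝ)^K * Complex.abs (1 - (z/(n:ℂ))^2) := qc_iter_small K hb
      _ ≤ (1/2:ℝ)^K * 1 := by nlinarith [Complex.abs.nonneg (1 - (z/(n:ℂ))^2)]
      _ = (1/2:ℝ)^K := mul_one _
  -- assemble
  refine ⟨fun z => Φ₀ z * χ₁ z, fun z => Ψ₀ z * χ₂ z,
    hΦ₀diff.mul hχ₁diff, hΨ₀diff.mul hχ₂diff, ?_, ?_, ?_⟩
  · intro z hz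
    have h1 := hΦ₀near z hz
    have h2 := hχ₁near z hz
    have h3 := hχ₂near z hz
    have hzball : z ∈ Metric.closedBall (0:ℂ) m := by
      rw [Metric.mem_closedBall, Complex.dist_eq, sub_zero]; exact hz
    have h4 := hM₁ z hzball
    have hΦ₀b : Complex.abs (Φ₀ z) ≤ 2 := by
      calc Complex.abs (Φ₀ z) = Complex.abs ((Φ₀ z - 1) + 1) := by ring_nf
        _ ≤ Complex.abs (Φ₀ z - 1) + 1 := by
            simpa using Complex.abs.add_le (Φ₀ z - 1) 1
        _ ≤ 2 := by linarith
    constructor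
    · have key : Φ₀ z * χ₁ z - 1 = Φ₀ z * (χ₁ z - 1) + (Φ₀ z - 1) := by ring
      rw [key]
      calc Complex.abs (Φ₀ z * (χ₁ z - 1) + (Φ₀ z - 1))
          ≤ Complex.abs (Φ₀ z) * Complex.abs (χ₁ z - 1) + Complex.abs (Φ₀ z - 1) := by
            rw [← map_mul]; exact Complex.abs.add_le _ _
        _ ≤ 2 * (1/2:ℝ)^K + 2*θ'/9 := by
            have := Complex.abs.nonneg (Φ₀ z)
            nlinarith
        _ ≤ θ' := by nlinarith
        _ ≤ θ := hθ'le
    · calc Complex.abs (Ψ₀ z * χ₂ z) = Complex.abs (Ψ₀ z) * Complex.abs (χ₂ z) := map_mul _ _ _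
        _ ≤ M₁ * (1/2:ℝ)^K := by nlinarith [Complex.abs.nonneg (Ψ₀ z), Complex.abs.nonneg (χ₂ z)]
        _ ≤ θ' := by
            have hfr : M₁ * ((1:ℝ)/2)^K ≤ M₁ * (θ'/(8*(M₁+M₂+1))) := by nlinarith
            have : M₁ * (θ'/(8*(M₁+M₂+1))) ≤ θ'/8 := by
              rw [mul_div_assoc']
              rw [div_le_div_iff₀ (by positivity) (by norm_num)]
              nlinarith
            linarith
        _ ≤ θ := hθ'le
  · intro z hz
    have h1 := hΨ₀near z hz
    have h2 := hχ₂far z hz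
    have h3 := hχ₁far z hz
    have hzball : z ∈ Metric.closedBall ((n:ℕ):ℂ) m := by
      rw [Metric.mem_closedBall, Complex.dist_eq]; exact hz
    have h4 := hM₂ z hzball
    have hΨ₀b : Complex.abs (Ψ₀ z) ≤ 2 := by
      calc Complex.abs (Ψ₀ z) = Complex.abs ((Ψ₀ z - 1) + 1) := by ring_nf
        _ ≤ Complex.abs (Ψ₀ z - 1) + 1 := by
            simpa using Complex.abs.add_le (Ψ₀ z - 1) 1
        _ ≤ 2 := by linarith
    constructor
    · calc Complex.abs (Φ₀ z * χ₁ z) = Complex.abs (Φ₀ z) * Complex.abs (χ₁ z) := map_mul _ _ _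
        _ ≤ M₂ * (1/2:ℝ)^K := by nlinarith [Complex.abs.nonneg (Φ₀ z), Complex.abs.nonneg (χ₁ z)]
        _ ≤ θ' := by
            have hfr : M₂ * ((1:ℝ)/2)^K ≤ M₂ * (θ'/(8*(M₁+M₂+1))) := by nlinarith
            have : M₂ * (θ'/(8*(M₁+M₂+1))) ≤ θ'/8 := by
              rw [mul_div_assoc']
              rw [div_le_div_iff₀ (by positivity) (by norm_num)]
              nlinarith
            linarith
        _ ≤ θ := hθ'le
    · have key : Ψ₀ z * χ₂ z - 1 = Ψ₀ z * (χ₂ z - 1) + (Ψ₀ z - 1) := by ring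
      rw [key]
      calc Complex.abs (Ψ₀ z * (χ₂ z - 1) + (Ψ₀ z - 1))
          ≤ Complex.abs (Ψ₀ z) * Complex.abs (χ₂ z - 1) + Complex.abs (Ψ₀ z - 1) := by
            rw [← map_mul]; exact Complex.abs.add_le _ _
        _ ≤ 2 * (1/2:ℝ)^K + 2*θ'/9 := by
            have := Complex.abs.nonneg (Ψ₀ z)
            nlinarith
        _ ≤ θ' := by nlinarith
        _ ≤ θ := hθ'le
  · intro k hk
    obtain ⟨h1, h2⟩ := hmem k hk
    have hk0 : ((k:ℕ):ℂ) ≠ 0 := Nat.cast_ne_zero.mpr (by omega)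
    have hnk0 : (n:ℂ) - (k:ℂ) ≠ 0 := by
      obtain ⟨hcastk, hge⟩ := hkcast k hk
      rw [hcastk]
      exact Nat.cast_ne_zero.mpr (by omega)
    constructor
    · show Φ₀ (k:ℂ) * χ₁ (k:ℂ) = 0
      have hzz : Φ₀ (k:ℂ) = 0 := by
        rw [hΦ₀]
        apply Finset.prod_eq_zero hk
        rw [div_self hk0, one_pow, sub_self]
      rw [hzz, zero_mul]
    · show Ψ₀ (k:ℂ) * χ₂ (k:ℂ) = 0
      have hzz : Ψ₀ (k:ℂ) = 0 := by
        rw [hΨ₀]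
        apply Finset.prod_eq_zero hk
        rw [div_self hnk0, one_pow, sub_self]
      rw [hzz, zero_mul]

set_option maxHeartbeats 1000000 in
/-- `P` is topologically mixing on the space of entire functions. -/
theorem P_mixing :
    ∀ f g : ℂ → ℂ, Differentiable ℂ f → Differentiable ℂ g →
    ∀ ε > (0 : ℝ), ∀ R > (0 : ℝ), ∃ N : ℕ, ∀ n ≥ N,
      ∃ h : ℂ → ℂ, Differentiable ℂ h ∧
        (∀ z : ℂ, ‖z‖ ≤ R → ‖h z - f z‖ < ε) ∧
        (∀ z : ℂ, ‖z‖ ≤ R → ‖(P^[n] h) z - g z‖ < ε) := by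
  intro f g hf hg ε hε R hR
  set m : ℕ := ⌊R⌋₊ + 1 with hmdef
  have hm1 : 1 ≤ m := by omega
  have hRm : R ≤ (m:ℝ) := by
    have := Nat.lt_floor_add_one R
    push_cast [hmdef]
    linarith
  obtain ⟨a, ha, hfa⟩ := exists_shift ((Finset.range (m+1)).image (fun k : ℕ => f (k:ℂ)))
    (ε/2) (by linarith)
  obtain ⟨b, hb, hgb⟩ := exists_shift ((Finset.Icc 1 m).image (fun j : ℕ => g (-(j:ℂ))))
    (ε/2) (by linarith)
  set ft : ℂ → ℂ := fun z => f z + a with hftdef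
  set gt : ℂ → ℂ := fun z => g z + b with hgtdef
  have hft : Differentiable ℂ ft := hf.add_const a
  have hgt : Differentiable ℂ gt := hg.add_const b
  have hftne : ∀ k : ℕ, k ≤ m → ft (k:ℂ) ≠ 0 := by
    intro k hk
    apply hfa
    refine Finset.mem_image.mpr ⟨k, ?_, rfl⟩
    exact Finset.mem_range.mpr (by omega)
  have hgtne : ∀ j : ℕ, 1 ≤ j → j ≤ m → gt (-(j:ℂ)) ≠ 0 := by
    intro j h1 h2
    apply hgb
    refine Finset.mem_image.mpr ⟨j, ?_, rfl⟩
    exact Finset.mem_Icc.mpr ⟨h1, h2⟩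
  refine ⟨24*m, ?_⟩
  intro n hn
  have hn0 : 0 < n := by omega
  have hnm : 2*m + 2 ≤ n := by omega
  -- the constant A
  set C : ℂ := ∏ k ∈ Finset.range (m+1), ft (k:ℂ) ^ (2^(n-1-k)) with hCdef
  set Dd : ℂ := ∏ k ∈ Finset.Ico (n-m) n, gt ((k:ℂ) - (n:ℂ)) ^ (2^(n-1-k)) with hDddef
  have hkneg : ∀ k ∈ Finset.Ico (n-m) n, (k:ℂ) - (n:ℂ) = -(((n-k:ℕ)):ℂ) := by
    intro k hk
    rw [Finset.mem_Ico] at hk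
    push_cast [Nat.cast_sub (by omega : k ≤ n)]
    ring
  have hC : C ≠ 0 := by
    rw [hCdef]
    apply Finset.prod_ne_zero_iff.mpr
    intro k hk
    exact pow_ne_zero _ (hftne k (by simp at hk; omega))
  have hDd : Dd ≠ 0 := by
    rw [hDddef]
    apply Finset.prod_ne_zero_iff.mpr
    intro k hk
    apply pow_ne_zero
    rw [hkneg k hk]
    rw [Finset.mem_Ico] at hk
    exact hgtne (n-k) (by omega) (by omega)
  set A : ℂ := (C * Dd) ^ ((((2^m : ℕ)):ℂ))⁻¹ with hAdef
  have h2mne : ((2:ℕ)^m) ≠ 0 := pow_ne_zero _ two_ne_zero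
  have hA : A ^ ((2:ℕ)^m) = C * Dd :=
    Complex.cpow_nat_inv_pow _ h2mne
  have hA0 : A ≠ 0 := by
    intro h0
    apply mul_ne_zero hC hDd
    rw [← hA, h0, zero_pow h2mne]
  set G : ℂ → ℂ := fun z => gt (z - (n:ℂ)) / A with hGdef
  have hGdiff : Differentiable ℂ G :=
    Differentiable.div_const (hgt.comp (differentiable_id.sub_const _)) A
  -- uniform bounds
  obtain ⟨Mf1, hMf11, hMf1b⟩ := bound_on_ball ft hft 0 (m:ℝ)
  obtain ⟨Mf2, hMf21, hMf2b⟩ := bound_on_ball ft hft ((n:ℕ):ℂ) (m:ℝ)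
  obtain ⟨Mg1, hMg11, hMg1b⟩ := bound_on_ball G hGdiff 0 (m:ℝ)
  obtain ⟨Mg2, hMg21, hMg2b⟩ := bound_on_ball G hGdiff ((n:ℕ):ℂ) (m:ℝ)
  set M : ℝ := Mf1 + Mf2 + Mg1 + Mg2 with hMdef
  have hM1 : 1 ≤ M := by rw [hMdef]; linarith
  have hMnear : ∀ z : ℂ, Complex.abs z ≤ m →
      Complex.abs (ft z) ≤ M ∧ Complex.abs (G z) ≤ M := by
    intro z hz
    have hmem : z ∈ Metric.closedBall (0:ℂ) (m:ℝ) := by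
      rw [Metric.mem_closedBall, Complex.dist_eq, sub_zero]; exact hz
    exact ⟨le_trans (hMf1b z hmem) (by rw [hMdef]; linarith),
           le_trans (hMg1b z hmem) (by rw [hMdef]; linarith)⟩
  have hMfar : ∀ z : ℂ, Complex.abs (z - (n:ℂ)) ≤ m →
      Complex.abs (ft z) ≤ M ∧ Complex.abs (G z) ≤ M := by
    intro z hz
    have hmem : z ∈ Metric.closedBall ((n:ℕ):ℂ) (m:ℝ) := by
      rw [Metric.mem_closedBall, Complex.dist_eq]; exact hz
    exact ⟨le_trans (hMf2b z hmem) (by rw [hMdef]; linarith),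
           le_trans (hMg2b z hmem) (by rw [hMdef]; linarith)⟩
  -- error budget
  set Esum : ℝ := ∑ k ∈ range n, ((2^(n-1-k) : ℕ) : ℝ) with hEsumdef
  set Big : ℝ := Esum * (M+1)^(2 * ∑ k ∈ range n, 2^(n-1-k)) with hBigdef
  have hEsum0 : 0 ≤ Esum := Finset.sum_nonneg (fun i _ => Nat.cast_nonneg _)
  have hBig0 : 0 ≤ Big := by
    rw [hBigdef]
    apply mul_nonneg hEsum0 (by positivity)
  set X : ℝ := Big * (M+1) + Complex.abs A with hXdef
  have hM1' : (0:ℝ) < M + 1 := by linarith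
  have hX0 : 0 ≤ X := by
    rw [hXdef]
    have h1 := Complex.abs.nonneg A
    have h2 : 0 ≤ Big * (M+1) := mul_nonneg hBig0 (by linarith)
    linarith
  set θ : ℝ := min (1/(2*(M+1))) (min (ε/(4*(M+1))) (ε/(4*(M+1)*(X + 1)))) with hθdef
  have hθ0 : 0 < θ := by
    rw [hθdef]
    have c1 : (0:ℝ) < 1/(2*(M+1)) := by
      apply div_pos one_pos; linarith
    have c2 : (0:ℝ) < ε/(4*(M+1)) := by
      apply div_pos hε; linarith
    have c3 : (0:ℝ) < ε/(4*(M+1)*(X + 1)) := by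
      apply div_pos hε
      apply mul_pos (by linarith) (by linarith)
    exact lt_min c1 (lt_min c2 c3)
  clear_value M Esum Big X θ
  obtain ⟨Φ, Ψ, hΦd, hΨd, hnearB, hfarB, hmidB⟩ := bump m n hm1 hn θ hθ0
  set hh : ℂ → ℂ := fun z => 1 + (ft z - 1) * Φ z + (G z - 1) * Ψ z with hhhdef
  have hhhd : Differentiable ℂ hh := by
    apply Differentiable.add
    apply Differentiable.add (differentiable_const 1)
    · exact (hft.sub_const 1).mul hΦd
    · exact (hGdiff.sub_const 1).mul hΨd
  set δ : ℝ := 2*(M+1)*θ with hδdef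
  have hδ0 : 0 ≤ δ := by
    rw [hδdef]
    exact mul_nonneg (by linarith) hθ0.le
  have hδ1 : δ ≤ 1 := by
    have h1 : θ ≤ 1/(2*(M+1)) := by rw [hθdef]; exact min_le_left _ _
    rw [hδdef]
    rw [le_div_iff₀ (by linarith : (0:ℝ) < 2*(M+1))] at h1
    linarith
  have hδε : δ ≤ ε/2 := by
    have h1 : θ ≤ ε/(4*(M+1)) := by rw [hθdef]; exact le_trans (min_le_right _ _) (min_le_left _ _)
    rw [hδdef]
    rw [le_div_iff₀ (by linarith : (0:ℝ) < 4*(M+1))] at h1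
    nlinarith
  have hδX : δ * X ≤ ε/2 := by
    have h1 : θ ≤ ε/(4*(M+1)*(X+1)) := by rw [hθdef]; exact le_trans (min_le_right _ _) (min_le_right _ _)
    rw [le_div_iff₀ (by nlinarith : (0:ℝ) < 4*(M+1)*(X+1))] at h1
    rw [hδdef]
    have hw : 0 ≤ θ*(M+1) := mul_nonneg hθ0.le (le_of_lt hM1')
    have h2 : 2*(M+1)*θ*X ≤ θ * (4*(M+1)*(X+1))/2 := by nlinarith
    linarith
  -- approximation of hh on the two disks
  have hnear_h : ∀ z : ℂ, Complex.abs z ≤ m → Complex.abs (hh z - ft z) ≤ δ := by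
    intro z hz
    obtain ⟨hP1, hP2⟩ := hnearB z hz
    obtain ⟨hft_b, hG_b⟩ := hMnear z hz
    have key : hh z - ft z = (ft z - 1) * (Φ z - 1) + (G z - 1) * Ψ z := by
      rw [hhhdef]; ring
    rw [key]
    have t1 : Complex.abs (ft z - 1) ≤ M + 1 := by
      calc Complex.abs (ft z - 1) ≤ Complex.abs (ft z) + Complex.abs 1 :=
            Complex.abs.sub_le_add _ _
        _ ≤ M + 1 := by simp; linarith
    have t2 : Complex.abs (G z - 1) ≤ M + 1 := by
      calc Complex.abs (G z - 1) ≤ Complex.abs (G z) + Complex.abs 1 :=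
            Complex.abs.sub_le_add _ _
        _ ≤ M + 1 := by simp; linarith
    calc Complex.abs ((ft z - 1) * (Φ z - 1) + (G z - 1) * Ψ z)
        ≤ Complex.abs (ft z - 1) * Complex.abs (Φ z - 1)
          + Complex.abs (G z - 1) * Complex.abs (Ψ z) := by
          rw [← map_mul, ← map_mul]; exact Complex.abs.add_le _ _
      _ ≤ (M+1)*θ + (M+1)*θ := by
          apply add_le_add
          · apply mul_le_mul t1 hP1 (Complex.abs.nonneg _) (by linarith)
          · apply mul_le_mul t2 hP2 (Complex.abs.nonneg _) (by linarith)
      _ = δ := by rw [hδdef]; ring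
  have hfar_h : ∀ z : ℂ, Complex.abs (z - (n:ℂ)) ≤ m → Complex.abs (hh z - G z) ≤ δ := by
    intro z hz
    obtain ⟨hP1, hP2⟩ := hfarB z hz
    obtain ⟨hft_b, hG_b⟩ := hMfar z hz
    have key : hh z - G z = (ft z - 1) * (Φ z) + (G z - 1) * (Ψ z - 1) := by
      rw [hhhdef]; ring
    rw [key]
    have t1 : Complex.abs (ft z - 1) ≤ M + 1 := by
      calc Complex.abs (ft z - 1) ≤ Complex.abs (ft z) + Complex.abs 1 :=
            Complex.abs.sub_le_add _ _
        _ ≤ M + 1 := by simp; linarith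
    have t2 : Complex.abs (G z - 1) ≤ M + 1 := by
      calc Complex.abs (G z - 1) ≤ Complex.abs (G z) + Complex.abs 1 :=
            Complex.abs.sub_le_add _ _
        _ ≤ M + 1 := by simp; linarith
    calc Complex.abs ((ft z - 1) * (Φ z) + (G z - 1) * (Ψ z - 1))
        ≤ Complex.abs (ft z - 1) * Complex.abs (Φ z)
          + Complex.abs (G z - 1) * Complex.abs (Ψ z - 1) := by
          rw [← map_mul, ← map_mul]; exact Complex.abs.add_le _ _
      _ ≤ (M+1)*θ + (M+1)*θ := by
          apply add_le_add
          · apply mul_le_mul t1 hP1 (Complex.abs.nonneg _) (by linarith)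
          · apply mul_le_mul t2 hP2 (Complex.abs.nonneg _) (by linarith)
      _ = δ := by rw [hδdef]; ring
  refine ⟨hh, hhhd, ?_, ?_⟩
  · -- first approximation property
    intro z hz
    have hzm : Complex.abs z ≤ m := le_trans hz hRm
    have key : hh z - f z = (hh z - ft z) + a := by rw [hftdef]; ring
    rw [key]
    calc Complex.abs ((hh z - ft z) + a) ≤ Complex.abs (hh z - ft z) + Complex.abs a :=
          Complex.abs.add_le _ _
      _ < δ + ε/2 := by have := hnear_h z hzm; linarith
      _ ≤ ε := by linarith
  · -- second approximation property
    intro z hz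
    have hzm : Complex.abs z ≤ m := le_trans hz hRm
    rw [P_iterate hh n z]
    -- the ideal target values
    set t : ℕ → ℂ := fun k => if k ≤ m then ft (k:ℂ) else if k < n - m then 1 else G (k:ℂ)
      with htdef
    have hideal : ∏ k ∈ range n, t k ^ (2^(n-1-k)) = A := by
      have hb1 : ∏ k ∈ Finset.Ico 0 (m+1), t k ^ (2^(n-1-k)) = C := by
        rw [← Finset.range_eq_Ico, hCdef]
        apply Finset.prod_congr rfl
        intro k hk
        rw [Finset.mem_range] at hk
        rw [htdef]
        simp only [if_pos (by omega : k ≤ m)]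
      have hb2 : ∏ k ∈ Finset.Ico (m+1) (n-m), t k ^ (2^(n-1-k)) = 1 := by
        apply Finset.prod_eq_one
        intro k hk
        rw [Finset.mem_Ico] at hk
        rw [htdef]
        simp only [if_neg (by omega : ¬ k ≤ m), if_pos (by omega : k < n - m)]
        exact one_pow _
      have hb3 : ∏ k ∈ Finset.Ico (n-m) n, t k ^ (2^(n-1-k)) = Dd / A^(2^m - 1) := by
        have hstep : ∀ k ∈ Finset.Ico (n-m) n,
            t k ^ (2^(n-1-k)) = gt ((k:ℂ) - (n:ℂ)) ^ (2^(n-1-k)) / A ^ (2^(n-1-k)) := by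
          intro k hk
          rw [Finset.mem_Ico] at hk
          rw [htdef]
          simp only [if_neg (by omega : ¬ k ≤ m), if_neg (by omega : ¬ k < n - m)]
          rw [hGdef, div_pow]
        rw [Finset.prod_congr rfl hstep, Finset.prod_div_distrib,
          Finset.prod_pow_eq_pow_sum, sum_exp_right m n (by omega), hDddef]
      have hsplit1 : (∏ k ∈ Finset.Ico 0 (n-m), t k ^ (2^(n-1-k)))
          * ∏ k ∈ Finset.Ico (n-m) n, t k ^ (2^(n-1-k))
          = ∏ k ∈ Finset.Ico 0 n, t k ^ (2^(n-1-k)) :=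
        Finset.prod_Ico_consecutive _ (by omega) (by omega)
      have hsplit2 : (∏ k ∈ Finset.Ico 0 (m+1), t k ^ (2^(n-1-k)))
          * ∏ k ∈ Finset.Ico (m+1) (n-m), t k ^ (2^(n-1-k))
          = ∏ k ∈ Finset.Ico 0 (n-m), t k ^ (2^(n-1-k)) :=
        Finset.prod_Ico_consecutive _ (by omega) (by omega)
      rw [Finset.range_eq_Ico, ← hsplit1, ← hsplit2, hb1, hb2, hb3, mul_one]
      rw [mul_div_assoc', ← hA]
      have h2m : (2:ℕ)^m = (2^m - 1) + 1 := by
        have : 1 ≤ 2^m := Nat.one_le_two_pow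
        omega
      have hfin : A ^ ((2:ℕ)^m) = A^(2^m - 1) * A := by
        conv_lhs => rw [h2m]
        rw [pow_succ]
      rw [hfin, mul_comm (A ^ (2^m - 1)) A, mul_div_assoc,
        div_self (pow_ne_zero _ hA0), mul_one]
    -- integer value errors
    have ht_diff : ∀ k < n, Complex.abs (hh (k:ℂ) - t k) ≤ δ := by
      intro k hk
      rw [htdef]
      by_cases h1 : k ≤ m
      · simp only [if_pos h1]
        apply hnear_h
        rw [Complex.abs_natCast]
        exact_mod_cast h1
      · by_cases h2 : k < n - m
        · simp only [if_neg h1, if_pos h2]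
          have hmem : k ∈ Finset.Ico (m+1) (n-m) := Finset.mem_Ico.mpr ⟨by omega, h2⟩
          obtain ⟨hΦ0, hΨ0⟩ := hmidB k hmem
          have : hh (k:ℂ) = 1 := by
            rw [hhhdef]
            simp only [hΦ0, hΨ0, mul_zero, add_zero]
          rw [this, sub_self, map_zero]
          exact hδ0
        · simp only [if_neg h1, if_neg h2]
          apply hfar_h
          have : (k:ℂ) - (n:ℂ) = -(((n-k:ℕ)):ℂ) := by
            push_cast [Nat.cast_sub (by omega : k ≤ n)]
            ring
          rw [this, map_neg_eq_map, Complex.abs_natCast]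
          have : (n - k : ℕ) ≤ m := by omega
          exact_mod_cast this
    have ht_bound : ∀ k < n, Complex.abs (t k) ≤ M := by
      intro k hk
      rw [htdef]
      by_cases h1 : k ≤ m
      · simp only [if_pos h1]
        apply (hMnear (k:ℂ) ?_).1
        rw [Complex.abs_natCast]
        exact_mod_cast h1
      · by_cases h2 : k < n - m
        · simp only [if_neg h1, if_pos h2, map_one]
          linarith
        · simp only [if_neg h1, if_neg h2]
          apply (hMfar (k:ℂ) ?_).2
          have hcst : (k:ℂ) - (n:ℂ) = -(((n-k:ℕ)):ℂ) := by
            push_cast [Nat.cast_sub (by omega : k ≤ n)]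
            ring
          rw [hcst, map_neg_eq_map, Complex.abs_natCast]
          have : (n - k : ℕ) ≤ m := by omega
          exact_mod_cast this
    have hAact := prod_pow_diff (fun k => hh (k:ℂ)) t (fun k => 2^(n-1-k)) M δ hM1 hδ0 hδ1
      n ht_diff ht_bound
    rw [hideal] at hAact
    -- final estimate
    have hz2 : Complex.abs ((z + (n:ℂ)) - (n:ℂ)) ≤ m := by
      rw [add_sub_cancel_right]; exact hzm
    have hHG := hfar_h (z + (n:ℂ)) hz2
    have hGb : Complex.abs (G (z + (n:ℂ))) ≤ M := (hMfar _ hz2).2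
    have hHb : Complex.abs (hh (z + (n:ℂ))) ≤ M + 1 := by
      calc Complex.abs (hh (z + (n:ℂ)))
          = Complex.abs ((hh (z + (n:ℂ)) - G (z + (n:ℂ))) + G (z + (n:ℂ))) := by ring_nf
        _ ≤ Complex.abs (hh (z + (n:ℂ)) - G (z + (n:ℂ))) + Complex.abs (G (z + (n:ℂ))) :=
            Complex.abs.add_le _ _
        _ ≤ M + 1 := by linarith
    have hAG : A * G (z + (n:ℂ)) = g z + b := by
      rw [hGdef]
      simp only [add_sub_cancel_right]
      rw [mul_comm, div_mul_cancel₀ _ hA0]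
    set Aact : ℂ := ∏ k ∈ range n, hh (k:ℂ) ^ (2^(n-1-k)) with hAactdef
    have key : Aact * hh (z + (n:ℂ)) - g z
        = (Aact - A) * hh (z + (n:ℂ)) + A * (hh (z + (n:ℂ)) - G (z + (n:ℂ))) + b := by
      linear_combination hAG
    rw [key]
    have hterm1 : Complex.abs ((Aact - A) * hh (z + (n:ℂ))) ≤ (δ * Big) * (M + 1) := by
      rw [map_mul]
      apply mul_le_mul ?_ hHb (Complex.abs.nonneg _) (mul_nonneg hδ0 hBig0)
      calc Complex.abs (Aact - A) ≤ δ * Esum * (M+1)^(2 * ∑ k ∈ range n, 2^(n-1-k)) := by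
            rw [hEsumdef]; exact hAact
        _ = δ * Big := by rw [hBigdef]; ring
    have hterm2 : Complex.abs (A * (hh (z + (n:ℂ)) - G (z + (n:ℂ)))) ≤ Complex.abs A * δ := by
      rw [map_mul]
      apply mul_le_mul_of_nonneg_left hHG (Complex.abs.nonneg _)
    calc Complex.abs ((Aact - A) * hh (z + (n:ℂ))
            + A * (hh (z + (n:ℂ)) - G (z + (n:ℂ))) + b)
        ≤ Complex.abs ((Aact - A) * hh (z + (n:ℂ)))
          + Complex.abs (A * (hh (z + (n:ℂ)) - G (z + (n:ℂ)))) + Complex.abs b := by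
          calc Complex.abs ((Aact - A) * hh (z + (n:ℂ))
                  + A * (hh (z + (n:ℂ)) - G (z + (n:ℂ))) + b)
              ≤ Complex.abs ((Aact - A) * hh (z + (n:ℂ))
                  + A * (hh (z + (n:ℂ)) - G (z + (n:ℂ)))) + Complex.abs b :=
                Complex.abs.add_le _ _
            _ ≤ _ := by
                have := Complex.abs.add_le ((Aact - A) * hh (z + (n:ℂ)))
                  (A * (hh (z + (n:ℂ)) - G (z + (n:ℂ))))
                linarith
      _ ≤ (δ * Big) * (M + 1) + Complex.abs A * δ + Complex.abs b := by linarith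
      _ < ε := by
          have hXbound : (δ * Big) * (M + 1) + Complex.abs A * δ = δ * X := by
            rw [hXdef]; ring
          linarith [hδX, hb, hXbound]
end

section
/- The set of periodic points of the map P defined on entire functions by P(f)(z) = f(0)·f(z+1) is dense in H(ℂ): for every entire function g and every ε > 0, R > 0, there exist an entire function h and an integer n ≥ 1 such that P^n(h) = h and sup_{|z| ≤ R} |h(z) − g(z)| < ε. -/
open Complex Finset

/-- The constant produced by iterating `P`. -/
noncomputable def Pc (h : ℂ → ℂ) : ℕ → ℂ
  | 0 => 1
  | n+1 => (Pc h n)^2 * h n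

lemma P_iter (h : ℂ → ℂ) (n : ℕ) (z : ℂ) : P^[n] h z = Pc h n * h (z + n) := by
  induction n generalizing z with
  | zero => simp [Pc]
  | succ n ih =>
    rw [Function.iterate_succ_apply']
    show (P^[n] h) 0 * (P^[n] h) (z + 1) = _
    rw [ih, ih, Pc, zero_add]
    push_cast
    ring

lemma Pc_eq (h : ℂ → ℂ) (n : ℕ) : Pc h n = ∏ j ∈ range n, h j ^ 2^(n-1-j) := by
  induction n with
  | zero => simp [Pc]
  | succ n ih =>
    rw [Pc, ih, prod_range_succ, ← prod_pow]
    have : ∀ j ∈ range n, (h j ^ 2^(n-1-j))^2 = h j ^ 2^(n+1-1-j) := by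
      intro j hj
      rw [← pow_mul]
      congr 1
      have : n + 1 - 1 - j = (n - 1 - j) + 1 := by
        simp only [mem_range] at hj; omega
      rw [this, pow_succ]
    rw [prod_congr rfl this]
    congr 1
    simp

lemma abs_exp_I_sub_one (θ : ℝ) : ‖Complex.exp (θ * I) - 1‖ = 2 * |Real.sin (θ/2)| := by
  rw [Complex.exp_mul_I]
  have h1 : Complex.cos θ + Complex.sin θ * I - 1 = Complex.ofReal (Real.cos θ - 1) + Complex.ofReal (Real.sin θ) * I := by
    push_cast [Complex.ofReal_cos, Complex.ofReal_sin]; ring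
  rw [h1, Complex.norm_def, Complex.normSq_add_mul_I]
  have h2 : (Real.cos θ - 1)^2 + Real.sin θ ^2 = (2 * |Real.sin (θ/2)|)^2 := by
    have hs : Real.sin (θ/2) ^ 2 = 1/2 - Real.cos (2 * (θ/2)) / 2 := Real.sin_sq_eq_half_sub _
    rw [show 2 * (θ/2) = θ by ring] at hs
    have hc : Real.sin θ ^ 2 = 1 - Real.cos θ ^2 := Real.sin_sq θ
    rw [mul_pow, _root_.sq_abs]
    nlinarith [hs, hc]
  rw [h2, Real.sqrt_sq (by positivity)]

/-- The periodic points of `P` are dense in the space of entire functions. -/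
theorem P_periodic_points_dense :
    ∀ g : ℂ → ℂ, Differentiable ℂ g → ∀ ε > (0 : ℝ), ∀ R > (0 : ℝ),
      ∃ h : ℂ → ℂ, Differentiable ℂ h ∧ ∃ n : ℕ, 1 ≤ n ∧ P^[n] h = h ∧
        ∀ z : ℂ, ‖z‖ ≤ R → ‖h z - g z‖ < ε := by
  intro g hg ε hε R hR
  obtain ⟨K, hK⟩ := (isCompact_closedBall (0:ℂ) (R+1)).exists_bound_of_continuousOn
    hg.continuous.continuousOn
  have hK0 : 0 ≤ K := le_trans (norm_nonneg (g 0)) (hK 0 (by simp; positivity))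
  obtain ⟨d, hd0, hd⟩ := Metric.uniformContinuousOn_iff.mp
    ((isCompact_closedBall (0:ℂ) (R+1)).uniformContinuousOn_of_continuous
      hg.continuous.continuousOn) (ε/4) (by positivity)
  set dm : ℝ := min d 1 with hdm
  have hdm0 : 0 < dm := lt_min hd0 one_pos
  have hdmd : dm ≤ d := min_le_left _ _
  have hdm1 : dm ≤ 1 := min_le_right _ _
  obtain ⟨N, hN⟩ := exists_nat_ge (max (max 1 (2*Real.pi*R)) (4*Real.pi*R^2 / dm))
  have hN1 : (1:ℝ) ≤ N := le_trans (le_trans (le_max_left _ _) (le_max_left _ _)) hN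
  have hNR : 2*Real.pi*R ≤ N := le_trans (le_trans (le_max_right _ _) (le_max_left _ _)) hN
  have hNd : 4*Real.pi*R^2 / dm ≤ N := le_trans (le_max_right _ _) hN
  set n : ℕ := 2*N with hn
  have hNpos : 0 < N := by exact_mod_cast lt_of_lt_of_le zero_lt_one hN1
  have hn1 : 1 ≤ n := by omega
  have hncast : (n:ℝ) = 2*(N:ℝ) := by rw [hn]; push_cast; ring
  have hnpos : (0:ℝ) < n := by rw [hncast]; positivity
  have hnC : (n:ℂ) ≠ 0 := Nat.cast_ne_zero.mpr (by omega)
  have hπ := Real.pi_pos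
  -- basic objects
  set ω : ℂ := (2*(Real.pi:ℂ)*I)/n with hω
  have hω0 : ω ≠ 0 := by
    rw [hω]
    apply div_ne_zero _ hnC
    simp [Real.pi_ne_zero, I_ne_zero]
  have habsω : ‖ω‖ = 2*Real.pi/n := by
    rw [hω]
    rw [norm_div, norm_mul, norm_mul]
    simp [Complex.norm_real, Real.norm_eq_abs, abs_of_pos hπ, Complex.norm_natCast]
  set E : ℂ → ℂ := fun z => Complex.exp (ω*z) with hE
  have hωn : ω * n = 2*(Real.pi:ℂ)*I := by
    rw [hω]; field_simp
  have hEper : ∀ z, E (z + n) = E z := by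
    intro z
    simp only [hE]
    rw [mul_add, Complex.exp_add, hωn]
    have : Complex.exp (2*(Real.pi:ℂ)*I) = 1 := by
      simpa [mul_comm] using Complex.exp_two_pi_mul_I
    rw [this, mul_one]
  set W : ℂ → ℂ := fun z => (E z - 1)/ω with hW
  have hWper : ∀ z, W (z + n) = W z := by intro z; simp only [hW, hEper z]
  -- estimates on the disc
  have hωz : ∀ z : ℂ, ‖z‖ ≤ R → ‖ω*z‖ ≤ 1/2 := by
    intro z hz
    rw [norm_mul, habsω]
    have h1 : 2*Real.pi/(n:ℝ) * ‖z‖ ≤ 2*Real.pi/(n:ℝ) * R :=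
      mul_le_mul_of_nonneg_left hz (by positivity)
    have hgoal : 2*Real.pi/(n:ℝ) * ‖z‖ ≤ 1/2 → 2*Real.pi/(n:ℝ) * ‖z‖ ≤ 1/2 := id
    have h2 : 2*Real.pi/(n:ℝ) * R ≤ 1/2 := by
      rw [div_mul_eq_mul_div, div_le_div_iff₀ hnpos (by norm_num : (0:ℝ) < 2)]
      rw [hncast]
      nlinarith only [hNR, hπ, hR]
    linarith only [h1, h2]
  have hE1 : ∀ z : ℂ, ‖z‖ ≤ R → ‖E z - 1‖ ≤ 2 * ‖ω*z‖ := by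
    intro z hz
    exact Complex.norm_exp_sub_one_le (le_trans (hωz z hz) (by norm_num))
  have hWz : ∀ z : ℂ, ‖z‖ ≤ R → ‖W z - z‖ ≤ dm/4 := by
    intro z hz
    have key : W z - z = (E z - 1 - ω*z)/ω := by
      rw [hW, hE]
      field_simp
    rw [key, norm_div]
    have h1 : ‖E z - 1 - ω*z‖ ≤ ‖ω*z‖^2 :=
      Complex.norm_exp_sub_one_sub_id_le (le_trans (hωz z hz) (by norm_num))
    have h2 : ‖ω*z‖^2 = ‖ω‖^2 * ‖z‖^2 := by
      rw [norm_mul]; ring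
    have h3 : ‖E z - 1 - ω*z‖ / ‖ω‖ ≤ ‖ω‖ * ‖z‖^2 := by
      rw [div_le_iff₀ (norm_pos_iff.mpr hω0)]
      calc ‖E z - 1 - ω*z‖ ≤ ‖ω‖^2 * ‖z‖^2 := by rw [← h2]; exact h1
        _ = ‖ω‖ * ‖z‖^2 * ‖ω‖ := by ring
    have h4 : ‖ω‖ * ‖z‖^2 ≤ (2*Real.pi/n) * R^2 := by
      rw [habsω]
      apply mul_le_mul le_rfl _ (by positivity) (by positivity)
      exact pow_le_pow_left₀ (norm_nonneg z) hz 2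
    have h5 : (2*Real.pi/(n:ℝ)) * R^2 ≤ dm/4 := by
      rw [div_mul_eq_mul_div, div_le_div_iff₀ hnpos (by norm_num : (0:ℝ) < 4)]
      have h6 := (div_le_iff₀ hdm0).mp hNd
      rw [hncast]
      nlinarith only [h6, hπ, hR, hdm0]
    linarith only [h3, h4, h5]
  have hWmem : ∀ z : ℂ, ‖z‖ ≤ R → W z ∈ Metric.closedBall (0:ℂ) (R+1) := by
    intro z hz
    rw [Metric.mem_closedBall, Complex.dist_eq, sub_zero]
    calc ‖W z‖ ≤ ‖W z - z‖ + ‖z‖ := by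
          simpa using norm_add_le (W z - z) z
      _ ≤ dm/4 + R := add_le_add (hWz z hz) hz
      _ ≤ R + 1 := by linarith [hdm1]
  have hzmem : ∀ z : ℂ, ‖z‖ ≤ R → z ∈ Metric.closedBall (0:ℂ) (R+1) := by
    intro z hz
    rw [Metric.mem_closedBall, Complex.dist_eq, sub_zero]
    linarith
  have hgW : ∀ z : ℂ, ‖z‖ ≤ R → ‖g (W z) - g z‖ < ε/4 := by
    intro z hz
    have := hd (W z) (hWmem z hz) z (hzmem z hz) (by
      rw [Complex.dist_eq]
      calc ‖W z - z‖ ≤ dm/4 := hWz z hz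
        _ < d := by linarith [hdm0, hdmd])
    rwa [Complex.dist_eq] at this
  -- choice of δ
  set cand : ℕ → ℂ := fun k => ((ε/(8*((k:ℝ)+1)) : ℝ) : ℂ) with hcand
  have hcinj : Function.Injective cand := by
    intro a b hab
    simp only [hcand, Complex.ofReal_inj] at hab
    rw [div_eq_div_iff (by positivity) (by positivity)] at hab
    have h8 : 8*((b:ℝ)+1) = 8*((a:ℝ)+1) := mul_left_cancel₀ (ne_of_gt hε) hab
    have : (a:ℝ) = b := by linarith
    exact_mod_cast this
  obtain ⟨k, hk⟩ : ∃ k, cand k ∉ (Finset.range n).image (fun j : ℕ => -(g (W (j:ℂ)))) := by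
    by_contra hcon
    push_neg at hcon
    have hsub : Set.range cand ⊆ ((Finset.range n).image (fun j : ℕ => -(g (W (j:ℂ)))) : Finset ℂ) := by
      rintro x ⟨k, rfl⟩; exact hcon k
    exact (Set.infinite_range_of_injective hcinj)
      (Set.Finite.subset (Finset.finite_toSet _) hsub)
  set δ : ℂ := cand k with hδdef
  have habsδ : ‖δ‖ ≤ ε/8 := by
    rw [hδdef, hcand]
    simp only [Complex.norm_real, Real.norm_eq_abs]
    rw [abs_of_pos (by positivity)]
    rw [div_le_div_iff₀ (by positivity) (by norm_num : (0:ℝ) < 8)]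
    have := mul_nonneg hε.le (Nat.cast_nonneg (α := ℝ) k)
    linarith only [this, hε]
  set f : ℂ → ℂ := fun z => g (W z) + δ with hf
  have hfper : ∀ z, f (z + n) = f z := by intro z; simp only [hf, hWper z]
  have hfne : ∀ j, j ∈ range n → f (j:ℂ) ≠ 0 := by
    intro j hj hzero
    apply hk
    rw [Finset.mem_image]
    refine ⟨j, hj, ?_⟩
    have : δ = -(g (W (j:ℂ))) := by
      have := hzero
      rw [hf] at this
      linear_combination this
    rw [← this]
  -- B
  set B : ℂ := ∏ j ∈ range n, f (j:ℂ) ^ 2^(n-1-j) with hB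
  have hB0 : B ≠ 0 := by
    rw [hB]
    apply Finset.prod_ne_zero_iff.mpr
    intro j hj
    exact pow_ne_zero _ (hfne j hj)
  -- q
  set q : ℝ := Real.cos (Real.pi/n) with hq
  have hq0 : 0 ≤ q := by
    rw [hq]
    apply Real.cos_nonneg_of_mem_Icc
    constructor
    · have := div_nonneg hπ.le hnpos.le
      linarith only [this, hπ]
    · apply div_le_div_of_nonneg_left hπ.le (by norm_num : (0:ℝ) < 2)
      rw [hncast]; linarith only [hN1]
  have hq1 : q < 1 := by
    rw [hq, ← Real.cos_zero]
    apply Real.cos_lt_cos_of_nonneg_of_le_pi le_rfl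
    · calc Real.pi/(n:ℝ) ≤ Real.pi/1 := div_le_div_of_nonneg_left hπ.le one_pos (by exact_mod_cast hn1)
        _ = Real.pi := by ring
    · positivity
  -- v
  set v : ℕ → ℂ := fun j => E (j:ℂ) - 1 with hv
  have hvN : v N = -2 := by
    have hωN : ω * (N:ℂ) = (Real.pi:ℂ) * I := by
      have hn2 : (n:ℂ) = 2*(N:ℂ) := by rw [hn]; push_cast; ring
      have hNC : (N:ℂ) ≠ 0 := Nat.cast_ne_zero.mpr (by omega)
      rw [hω, hn2]
      field_simp
    rw [hv]
    simp only [hE]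
    rw [hωN, Complex.exp_pi_mul_I]
    norm_num
  have hvj : ∀ j ∈ range n, j ≠ N → ‖v j‖ ≤ 2*q := by
    intro j hj hjN
    have hjn : j < n := mem_range.mp hj
    have hjle : (j:ℝ) ≤ n := by exact_mod_cast hjn.le
    have hωj : ω * (j:ℂ) = ((2*Real.pi*(j:ℝ)/n : ℝ) : ℂ) * I := by
      rw [hω]
      push_cast
      field_simp
    have hvj' : v j = Complex.exp (((2*Real.pi*(j:ℝ)/n : ℝ):ℂ) * I) - 1 := by
      rw [hv]
      simp only [hE]
      rw [hωj]
    rw [hvj', abs_exp_I_sub_one, show (2*Real.pi*(j:ℝ)/n)/2 = Real.pi*(j:ℝ)/n by ring]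
    have hπjn0 : 0 ≤ Real.pi*(j:ℝ)/n := by positivity
    have hπjnle : Real.pi*(j:ℝ)/n ≤ Real.pi := by
      rw [div_le_iff₀ hnpos]
      have := mul_le_mul_of_nonneg_left hjle hπ.le
      linarith only [this]
    have hsin0 : 0 ≤ Real.sin (Real.pi*(j:ℝ)/n) :=
      Real.sin_nonneg_of_nonneg_of_le_pi hπjn0 hπjnle
    rw [_root_.abs_of_nonneg hsin0, ← Real.cos_pi_div_two_sub, ← Real.cos_abs]
    have hq' : Real.cos |Real.pi/2 - Real.pi*(j:ℝ)/n| ≤ q := by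
      rw [hq]
      apply Real.cos_le_cos_of_nonneg_of_le_pi (by positivity)
      · apply abs_le.mpr
        constructor
        · linarith only [hπjnle, hπ]
        · linarith only [hπjn0, hπ]
      · rcases lt_or_gt_of_ne hjN with hlt | hgt
        · apply le_abs.mpr; left
          have hj1 : (j:ℝ) + 1 ≤ N := by exact_mod_cast hlt
          have hmul : Real.pi*((j:ℝ)+1) ≤ Real.pi*N := mul_le_mul_of_nonneg_left hj1 hπ.le
          have heq : Real.pi/2 - Real.pi*(j:ℝ)/n - Real.pi/n = (Real.pi*N - Real.pi*((j:ℝ)+1))/n := by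
            rw [hncast]
            have hN0 : (N:ℝ) ≠ 0 := by positivity
            field_simp
            ring
          have hge := div_nonneg (by linarith only [hmul] : (0:ℝ) ≤ Real.pi*(N:ℝ) - Real.pi*((j:ℝ)+1)) hnpos.le
          rw [← heq] at hge
          linarith only [hge]
        · apply le_abs.mpr; right
          have hj1 : (N:ℝ) + 1 ≤ j := by exact_mod_cast hgt
          have hmul : Real.pi*((N:ℝ)+1) ≤ Real.pi*j := mul_le_mul_of_nonneg_left hj1 hπ.le
          have heq : -(Real.pi/2 - Real.pi*(j:ℝ)/n) - Real.pi/n = (Real.pi*(j:ℝ) - Real.pi*((N:ℝ)+1))/n := by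
            rw [hncast]
            have hN0 : (N:ℝ) ≠ 0 := by positivity
            field_simp
            ring
          have hge := div_nonneg (by linarith only [hmul] : (0:ℝ) ≤ Real.pi*(j:ℝ) - Real.pi*((N:ℝ)+1)) hnpos.le
          rw [← heq] at hge
          linarith only [hge]
    linarith only [hq']
  -- choice of m
  set L : ℝ := K + ε/8 + 1 with hL
  have hL0 : 0 < L := by positivity
  set τ : ℝ := min 1 (ε/(8*L)) with hτ
  have hτ0 : 0 < τ := lt_min one_pos (by positivity)
  have hτ1 : τ ≤ 1 := min_le_left _ _
  have hτ2 : τ ≤ ε/(8*L) := min_le_right _ _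
  set logB : ℂ := Complex.log B with hlogB
  have ht1 : Filter.Tendsto (fun m : ℕ => (n:ℝ)*2^n * q^m) Filter.atTop (nhds 0) := by
    have := tendsto_pow_atTop_nhds_zero_of_lt_one hq0 hq1
    simpa using this.const_mul ((n:ℝ)*2^n)
  have ht2 : Filter.Tendsto (fun m : ℕ => 2*‖logB‖ * (1/2:ℝ)^m) Filter.atTop (nhds 0) := by
    have := tendsto_pow_atTop_nhds_zero_of_lt_one (by norm_num : (0:ℝ) ≤ 1/2) (by norm_num : (1/2:ℝ) < 1)
    simpa using this.const_mul (2*‖logB‖)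
  have hev := (ht1.eventually_le_const (show (0:ℝ) < 2^(N-1)/2 by positivity)).and
    (ht2.eventually_le_const hτ0)
  obtain ⟨m, hm1, hm2⟩ := hev.exists
  -- the sum S
  set S : ℂ := ∑ j ∈ range n, ((2^(n-1-j) : ℕ) : ℂ) * v j ^ m with hS
  have hNn : N ∈ range n := mem_range.mpr (by omega)
  have htN : ‖((2^(n-1-N):ℕ):ℂ) * v N ^ m‖ = 2^(N-1) * 2^m := by
    rw [norm_mul, norm_pow, hvN]
    have e1 : ‖((2^(n-1-N):ℕ):ℂ)‖ = (2:ℝ)^(N-1) := by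
      rw [Complex.norm_natCast, show n-1-N = N-1 by omega]
      push_cast
      norm_num
    have e2 : ‖(-2 : ℂ)‖ = 2 := by
      rw [norm_neg]
      exact Complex.norm_two
    rw [e1, e2]
  have hrest : ‖∑ j ∈ (range n).erase N, ((2^(n-1-j):ℕ):ℂ) * v j ^ m‖
      ≤ (n:ℝ) * (2^n * (2*q)^m) := by
    calc ‖∑ j ∈ (range n).erase N, ((2^(n-1-j):ℕ):ℂ) * v j ^ m‖
        ≤ ∑ j ∈ (range n).erase N, ‖((2^(n-1-j):ℕ):ℂ) * v j ^ m‖ :=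
          norm_sum_le _ _
      _ ≤ ∑ _j ∈ (range n).erase N, (2:ℝ)^n * (2*q)^m := by
          apply sum_le_sum
          intro j hj
          rw [norm_mul, norm_pow, Complex.norm_natCast]
          apply mul_le_mul
          · calc ((2^(n-1-j):ℕ):ℝ) = 2^(n-1-j) := by push_cast; norm_num
              _ ≤ (2:ℝ)^n := pow_le_pow_right₀ one_le_two (by omega)
          · exact pow_le_pow_left₀ (norm_nonneg _)
              (hvj j (mem_of_mem_erase hj) (ne_of_mem_erase hj)) m
          · positivity
          · positivity
      _ ≤ (n:ℝ) * (2^n * (2*q)^m) := by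
          rw [sum_const, nsmul_eq_mul]
          apply mul_le_mul_of_nonneg_right _ (by positivity)
          calc (((range n).erase N).card : ℝ) ≤ ((range n).card : ℝ) := by
                exact Nat.cast_le.mpr (card_le_card (erase_subset _ _))
            _ = n := by rw [card_range]
  have hsplit : S = ((2^(n-1-N):ℕ):ℂ) * v N ^ m
      + ∑ j ∈ (range n).erase N, ((2^(n-1-j):ℕ):ℂ) * v j ^ m := by
    rw [hS, ← Finset.add_sum_erase _ _ hNn]
  have hSlow : (2:ℝ)^m/2 ≤ ‖S‖ := by
    have h1 : ‖((2^(n-1-N):ℕ):ℂ) * v N ^ m‖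
        ≤ ‖S‖ + ‖∑ j ∈ (range n).erase N, ((2^(n-1-j):ℕ):ℂ) * v j ^ m‖ := by
      have h2 := norm_add_le S (-(∑ j ∈ (range n).erase N, ((2^(n-1-j):ℕ):ℂ) * v j ^ m))
      rw [norm_neg] at h2
      calc ‖((2^(n-1-N):ℕ):ℂ) * v N ^ m‖
          = ‖S + -(∑ j ∈ (range n).erase N, ((2^(n-1-j):ℕ):ℂ) * v j ^ m)‖ := by
            rw [hsplit]; congr 1; ring
        _ ≤ _ := h2
    have hm1' : (n:ℝ)*(2^n*(2*q)^m) ≤ 2^(N-1)/2 * 2^m := by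
      have : (n:ℝ)*(2^n*(2*q)^m) = ((n:ℝ)*2^n*q^m)*2^m := by
        rw [mul_pow]; ring
      rw [this]
      exact mul_le_mul_of_nonneg_right hm1 (by positivity)
    have hpow1 : (1:ℝ) ≤ 2^(N-1) := one_le_pow₀ one_le_two
    have hp2m : (0:ℝ) < 2^m := by positivity
    nlinarith only [h1, htN, hrest, hm1', hpow1, hp2m]
  have hS0' : S ≠ 0 := by
    intro h0
    rw [h0, norm_zero] at hSlow
    have : (0:ℝ) < 2^m/2 := by positivity
    linarith only [this, hSlow]
  set c : ℂ := -logB/S with hc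
  set hfun : ℂ → ℂ := fun z => f z * Complex.exp (c * (E z - 1)^m) with hh
  -- differentiability
  have hEdiff : Differentiable ℂ E := by
    rw [hE]
    exact Complex.differentiable_exp.comp (differentiable_id.const_mul ω)
  have hWdiff : Differentiable ℂ W := by
    rw [hW]
    exact (hEdiff.sub_const 1).div_const ω
  have hfdiff : Differentiable ℂ f := by
    rw [hf]
    exact (hg.comp hWdiff).add_const δ
  have hhdiff : Differentiable ℂ hfun := by
    rw [hh]
    exact hfdiff.mul ((((hEdiff.sub_const 1).pow m).const_mul c).cexp)
  -- periodicity
  have hhper : ∀ z, hfun (z + (n:ℂ)) = hfun z := by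
    intro z
    simp only [hh]
    rw [hfper z, hEper z]
  -- the multiplicative constant is 1
  have hPc : Pc hfun n = 1 := by
    rw [Pc_eq]
    have hterm : ∀ j ∈ range n, hfun (j:ℂ) ^ 2^(n-1-j)
        = f (j:ℂ) ^ 2^(n-1-j) * Complex.exp (((2^(n-1-j):ℕ):ℂ) * (c * v j ^ m)) := by
      intro j hj
      simp only [hh, hv]
      rw [mul_pow, Complex.exp_nat_mul]
    rw [prod_congr rfl hterm, prod_mul_distrib, ← Complex.exp_sum]
    have hsum : ∑ j ∈ range n, ((2^(n-1-j):ℕ):ℂ) * (c * v j ^ m) = c * S := by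
      rw [hS, Finset.mul_sum]
      exact sum_congr rfl (fun j _ => by ring)
    rw [hsum, ← hB]
    have hcS : c * S = -logB := by
      rw [hc]
      field_simp
    rw [hcS, hlogB, Complex.exp_neg, Complex.exp_log hB0]
    exact mul_inv_cancel₀ hB0
  -- size of the correction on the disc
  have hcu : ∀ z : ℂ, ‖z‖ ≤ R → ‖c * (E z - 1)^m‖ ≤ τ := by
    intro z hz
    rw [norm_mul, norm_pow]
    have h1 : ‖c‖ ≤ 2*‖logB‖/2^m := by
      rw [hc, norm_div, norm_neg]
      rw [div_le_div_iff₀ (norm_pos_iff.mpr hS0') (by positivity : (0:ℝ) < 2^m)]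
      have h2 := mul_le_mul_of_nonneg_left hSlow (norm_nonneg logB)
      nlinarith only [h2, norm_nonneg logB, norm_nonneg S]
    have hE1' : ‖E z - 1‖ ≤ 1 := le_trans (hE1 z hz) (by linarith only [hωz z hz])
    calc ‖c‖ * ‖E z - 1‖^m ≤ (2*‖logB‖/2^m) * 1 := by
          apply mul_le_mul h1 _ (by positivity) (by positivity)
          exact pow_le_one₀ (norm_nonneg _) hE1'
      _ = 2*‖logB‖ * (1/2:ℝ)^m := by
          rw [div_pow, one_pow, mul_one]
          ring
      _ ≤ τ := hm2
  -- conclusion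
  refine ⟨hfun, hhdiff, n, hn1, ?_, ?_⟩
  · funext z
    rw [P_iter, hPc, one_mul, hhper]
  · intro z hz
    have hdecomp : hfun z - g z
        = f z * (Complex.exp (c * (E z - 1)^m) - 1) + ((g (W z) - g z) + δ) := by
      simp only [hh, hf]
      ring
    have habsf : ‖f z‖ ≤ L := by
      simp only [hf]
      calc ‖g (W z) + δ‖ ≤ ‖g (W z)‖ + ‖δ‖ :=
            norm_add_le _ _
        _ ≤ K + ε/8 := by
            apply add_le_add _ habsδ
            have := hK _ (hWmem z hz)
            exact this
        _ ≤ L := by rw [hL]; linarith only []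
    have hexp1 : ‖Complex.exp (c * (E z - 1)^m) - 1‖ ≤ 2*τ := by
      calc ‖Complex.exp (c * (E z - 1)^m) - 1‖
          ≤ 2*‖c * (E z - 1)^m‖ :=
            Complex.norm_exp_sub_one_le (le_trans (hcu z hz) hτ1)
        _ ≤ 2*τ := by linarith only [hcu z hz]
    have hmain : ‖hfun z - g z‖
        ≤ L*(2*τ) + (ε/4 + ε/8) := by
      calc ‖hfun z - g z‖
          ≤ ‖f z * (Complex.exp (c * (E z - 1)^m) - 1)‖
            + ‖(g (W z) - g z) + δ‖ := by
            rw [hdecomp]; exact norm_add_le _ _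
        _ ≤ L*(2*τ) + (ε/4 + ε/8) := by
            apply add_le_add
            · rw [norm_mul]
              exact mul_le_mul habsf hexp1 (norm_nonneg _) hL0.le
            · exact (norm_add_le _ _).trans
                (add_le_add (le_of_lt (hgW z hz)) habsδ)
    have hLτ : L*(2*τ) ≤ ε/4 := by
      have h3 : L*(2*τ) ≤ L*(2*(ε/(8*L))) := by
        apply mul_le_mul_of_nonneg_left _ hL0.le
        linarith only [hτ2]
      have h4 : L*(2*(ε/(8*L))) = ε/4 := by
        field_simp
        ring
      linarith only [h3, h4]
    linarith only [hmain, hLτ, hε]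
end

section
/- Let P be the map on entire functions defined by P(f)(z) = f(0)·f(z+1), let f be an entire function, let n ≥ 1 and α ∈ ℂ be such that f(z+n) = α·f(z) for all z ∈ ℂ, and suppose β ∈ ℂ satisfies β^{2^n − 1} = 1/(c_n(f)·α) (in particular c_n(f)·α ≠ 0). Then the entire function g = β·f is an n-periodic point of P, that is, P^n(g) = g. -/
/-- `c_n(f) = ∏_{j=0}^{n-1} f(j)^{2^{n-1-j}}`. -/
noncomputable def c (n : ℕ) (f : ℂ → ℂ) : ℂ :=
  ∏ j ∈ Finset.range n, f j ^ 2 ^ (n - 1 - j)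

lemma c_succ (n : ℕ) (f : ℂ → ℂ) : c (n + 1) f = c n f ^ 2 * f n := by
  unfold c
  rw [Finset.prod_range_succ]
  congr 1
  · rw [← Finset.prod_pow]
    apply Finset.prod_congr rfl
    intro j hj
    rw [← pow_mul, ← pow_succ]
    have hj' : j < n := Finset.mem_range.mp hj
    have : n + 1 - 1 - j = n - 1 - j + 1 := by omega
    rw [this]
  · simp

lemma iter_P (f : ℂ → ℂ) (n : ℕ) (z : ℂ) : P^[n] f z = c n f * f (z + n) := by
  induction n generalizing z with
  | zero => simp [c]
  | succ n ih =>
    rw [Function.iterate_succ_apply']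
    show (P^[n] f) 0 * (P^[n] f) (z + 1) = _
    rw [ih 0, ih (z + 1), c_succ]
    have h1 : (0 : ℂ) + (n : ℂ) = (n : ℂ) := by ring
    have h2 : z + 1 + (n : ℂ) = z + ((n : ℕ) + 1 : ℕ) := by push_cast; ring
    rw [h1, h2]
    ring

lemma c_smul (n : ℕ) (f : ℂ → ℂ) (β : ℂ) :
    c n (fun z => β * f z) = β ^ (2 ^ n - 1) * c n f := by
  induction n with
  | zero => simp [c]
  | succ n ih =>
    rw [c_succ, c_succ, ih]
    have h : β ^ ((2 ^ n - 1) * 2) * β = β ^ (2 ^ (n + 1) - 1) := by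
      rw [← pow_succ]
      congr 1
      have : 1 ≤ 2 ^ n := Nat.one_le_two_pow
      have : 2 ^ (n + 1) = 2 * 2 ^ n := by ring
      omega
    calc (β ^ (2 ^ n - 1) * c n f) ^ 2 * (β * f n)
        = (β ^ ((2 ^ n - 1) * 2) * β) * (c n f ^ 2 * f n) := by ring
      _ = β ^ (2 ^ (n + 1) - 1) * (c n f ^ 2 * f n) := by rw [h]

/-- If `f` is entire and quasiperiodic, `f(z+n) = α·f(z)`, and
`β^{2^n - 1} = 1/(c_n(f)·α)`, then `β·f` is an `n`-periodic point of `P`. -/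
theorem P_periodic_from_quasiperiodic
    (f : ℂ → ℂ) (hf : Differentiable ℂ f) (n : ℕ) (hn : 1 ≤ n) (α β : ℂ)
    (hqp : ∀ z : ℂ, f (z + n) = α * f z)
    (hβ : β ^ (2 ^ n - 1) = 1 / (c n f * α)) :
    P^[n] (fun z => β * f z) = fun z => β * f z := by
  funext z
  rw [iter_P, c_smul, hqp]
  by_cases hcα : c n f * α = 0
  · have hβ0 : β = 0 := by
      have hk : 2 ^ n - 1 ≠ 0 := by
        have : 2 ^ 1 ≤ 2 ^ n := Nat.pow_le_pow_right (by norm_num) hn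
        omega
      have : β ^ (2 ^ n - 1) = 0 := by rw [hβ, hcα]; simp
      exact pow_eq_zero_iff hk |>.mp this
    simp [hβ0]
  · rw [hβ]
    have hc : c n f ≠ 0 := left_ne_zero_of_mul hcα
    have ha : α ≠ 0 := right_ne_zero_of_mul hcα
    field_simp
end

section
/- Entire functions that are periodic with arbitrarily large integer period are dense in H(ℂ): for every entire function g, every ε > 0, R > 0, and every n₀ ∈ ℕ, there exist an integer n > n₀ and an entire function f with f(z+n) = f(z) for all z ∈ ℂ and sup_{|z| ≤ R} |f(z) − g(z)| < ε. -/
open Complex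

/-- Entire functions periodic with arbitrarily large integer period are dense
in the space of entire functions. -/
theorem periodic_functions_dense :
    ∀ g : ℂ → ℂ, Differentiable ℂ g → ∀ ε > (0 : ℝ), ∀ R > (0 : ℝ), ∀ n₀ : ℕ,
      ∃ n : ℕ, n₀ < n ∧ ∃ f : ℂ → ℂ, Differentiable ℂ f ∧
        (∀ z : ℂ, f (z + n) = f z) ∧
        ∀ z : ℂ, ‖z‖ ≤ R → ‖f z - g z‖ < ε := by
  intro g hg ε hε R hR n₀
  obtain ⟨δ, hδ, hδ'⟩ := (Metric.uniformContinuousOn_iff).mp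
    ((isCompact_closedBall (0:ℂ) (R+1)).uniformContinuousOn_of_continuous
      hg.continuous.continuousOn) ε hε
  have hπ := Real.pi_pos
  have hmin : (0:ℝ) < min δ 1 := lt_min hδ one_pos
  obtain ⟨n, hn⟩ := exists_nat_gt
    (max (n₀:ℝ) (max (2*Real.pi*R) (2*Real.pi*R^2 / min δ 1)))
  have hn₀ : (n₀:ℝ) < n := lt_of_le_of_lt (le_max_left _ _) hn
  have hnR : 2*Real.pi*R < n := lt_of_le_of_lt ((le_max_left _ _).trans (le_max_right _ _)) hn
  have hnδ : 2*Real.pi*R^2 / min δ 1 < n :=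
    lt_of_le_of_lt ((le_max_right _ _).trans (le_max_right _ _)) hn
  have hnpos : (0:ℝ) < n := lt_trans (by positivity) hnR
  have hnne : (n:ℂ) ≠ 0 := by
    exact_mod_cast (Nat.cast_pos.mpr (by exact_mod_cast hnpos)).ne'
  set c : ℂ := 2*Real.pi*I/n with hc
  have hcne : c ≠ 0 := by
    apply div_ne_zero _ hnne
    simp [Real.pi_ne_zero, I_ne_zero]
  have hcn : c * n = 2*Real.pi*I := by
    rw [hc, div_mul_cancel₀ _ hnne]
  have habsc : ‖c‖ = 2*Real.pi/n := by
    simp [hc, norm_div, Complex.norm_real, abs_of_pos hπ, Complex.norm_natCast]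
  set h : ℂ → ℂ := fun z => (Complex.exp (c*z) - 1)/c with hh
  have hdh : Differentiable ℂ h := by
    apply Differentiable.div_const
    exact (Differentiable.cexp ((differentiable_const c).mul differentiable_id)).sub_const 1
  -- key estimate
  have key : ∀ z : ℂ, ‖z‖ ≤ R → ‖h z - z‖ < min δ 1 := by
    intro z hz
    have habs : ‖z‖ ≥ 0 := (norm_nonneg z)
    have hcz : ‖c*z‖ ≤ 2*Real.pi*R/n := by
      calc ‖c*z‖ = 2*Real.pi/n * ‖z‖ := by rw [norm_mul, habsc]
        _ ≤ 2*Real.pi/n * R := mul_le_mul_of_nonneg_left hz (by positivity)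
        _ = 2*Real.pi*R/n := by ring
    have hcz1 : ‖c*z‖ ≤ 1 := by
      apply hcz.trans
      rw [div_le_one hnpos]
      nlinarith
    have hexp := Complex.norm_exp_sub_one_sub_id_le hcz1
    have heq : h z - z = (Complex.exp (c*z) - 1 - c*z)/c := by
      simp only [hh]
      rw [eq_div_iff hcne, sub_mul, div_mul_cancel₀ _ hcne]
      ring
    rw [heq, norm_div]
    calc ‖Complex.exp (c*z) - 1 - c*z‖ / ‖c‖
        ≤ ‖c*z‖^2 / ‖c‖ := by
          exact div_le_div_of_nonneg_right hexp (norm_pos_iff.mpr hcne).le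
      _ = ‖c‖ * ‖z‖ ^ 2 := by
          rw [norm_mul]
          field_simp [norm_ne_zero_iff.mpr hcne]
      _ = 2*Real.pi/n * ‖z‖ ^ 2 := by rw [habsc]
      _ ≤ 2*Real.pi/n * R^2 := by
          have h1 : ‖z‖ ^ 2 ≤ R^2 := by nlinarith [norm_nonneg z]
          exact mul_le_mul_of_nonneg_left h1 (by positivity)
      _ = 2*Real.pi*R^2/n := by ring
      _ < min δ 1 := by
          rw [div_lt_iff₀ hnpos]
          rw [div_lt_iff₀ hmin] at hnδ
          nlinarith [hmin, hnpos]
  refine ⟨n, by exact_mod_cast hn₀, g ∘ h, hg.comp hdh, ?_, ?_⟩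
  · intro z
    simp only [Function.comp_apply, hh]
    congr 2
    rw [mul_add, hcn, Complex.exp_add]
    simp [Complex.exp_two_pi_mul_I]
  · intro z hz
    have hkey := key z hz
    have hhz : h z ∈ Metric.closedBall (0:ℂ) (R+1) := by
      rw [Metric.mem_closedBall, dist_zero_right]
      calc ‖h z‖ = ‖h z - z + z‖ := by simp
        _ ≤ ‖h z - z‖ + ‖z‖ := norm_add_le _ _
        _ ≤ 1 + R := by
            have := hkey.le.trans (min_le_right δ 1)
            linarith
        _ = R + 1 := by ring
    have hzmem : z ∈ Metric.closedBall (0:ℂ) (R+1) := by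
      rw [Metric.mem_closedBall, dist_zero_right]
      linarith
    have hdist : dist (h z) z < δ := by
      rw [Complex.dist_eq]
      exact hkey.trans_le (min_le_left δ 1)
    have := hδ' (h z) hhz z hzmem hdist
    rwa [Complex.dist_eq] at this
end

section
/- There exists a family (A_{n,m})_{n,m ∈ ℕ} of pairwise disjoint subsets of ℕ, each having positive lower density, such that for any k ∈ A_{n,m} and k' ∈ A_{n',m'} one has k > m, and |k − k'| > m + m' whenever k ≠ k'. -/
open Filter

open scoped Classical in
/-- A set `A ⊆ ℕ` has positive lower density. -/
noncomputable def PosLowerDensity (A : Set ℕ) : Prop :=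
  0 < Filter.atTop.liminf (fun N : ℕ =>
    (((Finset.range (N + 1)).filter (fun k => k ∈ A)).card : ℝ) / N)

/- Auxiliary construction: for each label `e`, for each scale parameter `r`,
we put an arithmetic progression of step `2^(e+2)` inside the "region"
`[Bb e q, Bb e q + 2^q)` where `q = 2*e+28+r`, keeping a margin
`6*e+62+2*r = 2*q+2*e+6` from the region boundary.  Regions for distinct
`(e, q)` are pairwise disjoint intervals. -/

private def Bb (e q : ℕ) : ℕ := 2^(q+2) * (2^(e+1) - 1)

private lemma Bb_add (e q : ℕ) : Bb e q + 2^(q+2) = 2^(q+e+3) := by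
  have h1 : (2:ℕ)^(e+1) - 1 + 1 = 2^(e+1) :=
    Nat.succ_pred_eq_of_pos (Nat.pow_pos (by norm_num))
  have : Bb e q + 2^(q+2) = 2^(q+2) * ((2^(e+1) - 1) + 1) := by
    rw [Nat.mul_add, Nat.mul_one, Bb]
  rw [this, h1, ← pow_add]
  congr 1
  omega

private lemma twelve_le_pow {q : ℕ} (h : 7 ≤ q) : 12*q + 24 ≤ 2^q := by
  induction q, h using Nat.le_induction with
  | base => norm_num
  | succ n hn ih =>
    have h128 : (2:ℕ)^7 = 128 := by norm_num
    have h2 : (2:ℕ)^7 ≤ 2^n := Nat.pow_le_pow_right (by norm_num) hn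
    have h3 : (2:ℕ)^(n+1) = 2^n * 2 := pow_succ 2 n
    omega

/-- The regions are pairwise disjoint, indeed linearly ordered. -/
private lemma regionOrder {e q e' q' : ℕ} (h : e ≠ e' ∨ q ≠ q') :
    Bb e q + 2^q ≤ Bb e' q' ∨ Bb e' q' + 2^q' ≤ Bb e q := by
  have hX : Bb e q + 2^(q+2) = 2^(q+e+3) := Bb_add e q
  have hX' : Bb e' q' + 2^(q'+2) = 2^(q'+e'+3) := Bb_add e' q'
  rcases lt_trichotomy (q+e) (q'+e') with hj | hj | hj
  · left
    have h2 : (2:ℕ)^q ≤ 2^(q+2) := Nat.pow_le_pow_right (by norm_num) (by omega)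
    have h3 : (2:ℕ)^(q+e+3) ≤ 2^(q'+e'+2) := Nat.pow_le_pow_right (by norm_num) (by omega)
    have h4 : (2:ℕ)^(q'+2) ≤ 2^(q'+e'+2) := Nat.pow_le_pow_right (by norm_num) (by omega)
    have h5 : (2:ℕ)^(q'+e'+2) + 2^(q'+e'+2) = 2^(q'+e'+3) := by
      rw [← two_mul, ← pow_succ']
    omega
  · -- same dyadic block
    have he : e ≠ e' := by rintro rfl; omega
    rcases Nat.lt_or_ge e e' with hee | hee
    · -- e < e', hence q' < q, region of e is to the left
      left
      have hq : q' < q := by omega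
      have hqq : q + e + 3 = q' + e' + 3 := by omega
      rw [hqq] at hX
      have h2 : (2:ℕ)^(q'+2) ≤ 2^(q+1) := Nat.pow_le_pow_right (by norm_num) (by omega)
      have h3 : (2:ℕ)^q ≤ 2^(q+1) := Nat.pow_le_pow_right (by norm_num) (by omega)
      have h4 : (2:ℕ)^(q+1) + 2^(q+1) = 2^(q+2) := by rw [← two_mul, ← pow_succ']
      omega
    · right
      have hee' : e' < e := by omega
      have hq : q < q' := by omega
      have hqq : q' + e' + 3 = q + e + 3 := by omega
      rw [hqq] at hX'
      have h2 : (2:ℕ)^(q+2) ≤ 2^(q'+1) := Nat.pow_le_pow_right (by norm_num) (by omega)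
      have h3 : (2:ℕ)^q' ≤ 2^(q'+1) := Nat.pow_le_pow_right (by norm_num) (by omega)
      have h4 : (2:ℕ)^(q'+1) + 2^(q'+1) = 2^(q'+2) := by rw [← two_mul, ← pow_succ']
      omega
  · right
    have h2 : (2:ℕ)^q' ≤ 2^(q'+2) := Nat.pow_le_pow_right (by norm_num) (by omega)
    have h3 : (2:ℕ)^(q'+e'+3) ≤ 2^(q+e+2) := Nat.pow_le_pow_right (by norm_num) (by omega)
    have h4 : (2:ℕ)^(q+2) ≤ 2^(q+e+2) := Nat.pow_le_pow_right (by norm_num) (by omega)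
    have h5 : (2:ℕ)^(q+e+2) + 2^(q+e+2) = 2^(q+e+3) := by
      rw [← two_mul, ← pow_succ']
    omega

private def ff (e r t : ℕ) : ℕ := Bb e (2*e+28+r) + (6*e + 62 + 2*r) + 2^(e+2) * t

private def AA (e : ℕ) : Set ℕ := { k | ∃ r t, t < 2^(e+25+r) ∧ k = ff e r t }

private lemma ff_lower (e r t : ℕ) :
    Bb e (2*e+28+r) + (6*e + 62 + 2*r) ≤ ff e r t :=
  Nat.le_add_right _ _

private lemma ff_upper {e r t : ℕ} (ht : t < 2^(e+25+r)) :
    ff e r t + (6*e + 62 + 2*r) ≤ Bb e (2*e+28+r) + 2^(2*e+28+r) := by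
  have ha : 2^(e+2) * t + 2^(e+2) ≤ 2^(2*e+27+r) := by
    have : 2^(e+2) * (t+1) ≤ 2^(e+2) * 2^(e+25+r) :=
      Nat.mul_le_mul_left _ (by omega)
    rw [Nat.mul_add, Nat.mul_one, ← pow_add] at this
    calc 2^(e+2) * t + 2^(e+2) ≤ 2^(e+2+(e+25+r)) := this
      _ = 2^(2*e+27+r) := by congr 1; omega
  have hb : 2*(6*e + 62 + 2*r) ≤ 2^(2*e+27+r) := by
    have h1 : 12*(2*e+27+r) + 24 ≤ 2^(2*e+27+r) := twelve_le_pow (by omega)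
    omega
  have hc : (2:ℕ)^(2*e+27+r) + 2^(2*e+27+r) = 2^(2*e+28+r) := by
    rw [← two_mul, ← pow_succ']
    congr 1
    omega
  have hf : (0:ℕ) < 2^(e+2) := Nat.pow_pos (by norm_num)
  rw [ff]
  omega

/-- Separation: two distinct points of the construction with labels `e, e'`
are more than `e + e'` apart. -/
private lemma sep {e r t e' r' t' : ℕ} (ht : t < 2^(e+25+r)) (ht' : t' < 2^(e'+25+r'))
    (hne : ff e r t ≠ ff e' r' t') :
    ff e r t + (e + e') < ff e' r' t' ∨ ff e' r' t' + (e + e') < ff e r t := by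
  by_cases hsame : e = e' ∧ r = r'
  · obtain ⟨rfl, rfl⟩ := hsame
    have hstep : 4*(e+1) ≤ 2^(e+2) := by
      have h1 : e < 2^e := Nat.lt_two_pow_self
      have h2 : (2:ℕ)^(e+2) = 4 * 2^e := by rw [pow_add]; ring
      omega
    rcases lt_trichotomy t t' with h | h | h
    · left
      have : 2^(e+2) * t + 2^(e+2) ≤ 2^(e+2) * t' := by
        have := Nat.mul_le_mul_left (2^(e+2)) (show t+1 ≤ t' by omega)
        rwa [Nat.mul_add, Nat.mul_one] at this
      rw [ff, ff]
      omega
    · exact absurd (by rw [h]) hne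
    · right
      have : 2^(e+2) * t' + 2^(e+2) ≤ 2^(e+2) * t := by
        have := Nat.mul_le_mul_left (2^(e+2)) (show t'+1 ≤ t by omega)
        rwa [Nat.mul_add, Nat.mul_one] at this
      rw [ff, ff]
      omega
  · have hregion : e ≠ e' ∨ (2*e+28+r) ≠ (2*e'+28+r') := by
      by_cases he : e = e'
      · subst he; right; omega
      · exact Or.inl he
    rcases regionOrder hregion with ho | ho
    · left
      have b1 := ff_upper ht
      have b2 := ff_lower e' r' t'
      omega
    · right
      have b1 := ff_upper ht'
      have b2 := ff_lower e r t
      omega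

private lemma AA_disjoint {e e' : ℕ} (h : e ≠ e') : AA e ∩ AA e' = ∅ := by
  rw [Set.eq_empty_iff_forall_notMem]
  rintro k ⟨⟨r, t, ht, rfl⟩, ⟨r', t', ht', hk'⟩⟩
  have hne : ff e r t ≠ ff e' r' t' ∨ True := Or.inr trivial
  rcases regionOrder (Or.inl h : e ≠ e' ∨ (2*e+28+r) ≠ (2*e'+28+r')) with ho | ho
  · have b1 := ff_upper ht
    have b2 := ff_lower e' r' t'
    omega
  · have b1 := ff_upper ht'
    have b2 := ff_lower e r t
    omega

open scoped Classical in
private lemma counting (e N : ℕ) (hN : 2^(3*e+31) ≤ N) :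
    2^(e+25+(Nat.log 2 N - (3*e+31))) ≤
      ((Finset.range (N+1)).filter (fun k => k ∈ AA e)).card ∧
    N < 2^(2*e+7) * 2^(e+25+(Nat.log 2 N - (3*e+31))) := by
  have hN0 : N ≠ 0 := by
    have := Nat.pow_pos (n := 3*e+31) (show 0 < 2 by norm_num)
    omega
  have hlog : 3*e+31 ≤ Nat.log 2 N :=
    (Nat.le_log_iff_pow_le (by norm_num) hN0).mpr hN
  set r : ℕ := Nat.log 2 N - (3*e+31) with hr
  have hlog' : Nat.log 2 N = 3*e+31+r := by omega
  have hpowN : 2^(3*e+31+r) ≤ N := by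
    rw [← hlog']
    exact Nat.pow_log_le_self 2 hN0
  constructor
  · -- injection of `range (2^(e+25+r))` into the filtered set
    have hinj : (Finset.range (2^(e+25+r))).card ≤
        ((Finset.range (N+1)).filter (fun k => k ∈ AA e)).card := by
      apply Finset.card_le_card_of_injOn (fun t => ff e r t)
      · intro t htmem
        rw [Finset.mem_coe, Finset.mem_filter, Finset.mem_range]
        rw [Finset.mem_coe, Finset.mem_range] at htmem
        constructor
        · -- ff e r t < N + 1
          have h1 := ff_upper htmem
          have h2 : Bb e (2*e+28+r) + 2^(2*e+28+r) ≤ 2^(2*e+28+r+e+3) := by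
            have h3 := Bb_add e (2*e+28+r)
            have h4 : (2:ℕ)^(2*e+28+r) ≤ 2^(2*e+28+r+2) :=
              Nat.pow_le_pow_right (by norm_num) (by omega)
            omega
          have h5 : (2:ℕ)^(2*e+28+r+e+3) = 2^(3*e+31+r) := by congr 1; omega
          show ff e r t < N + 1
          omega
        · exact ⟨r, t, htmem, rfl⟩
      · intro a _ b _ hab
        simp only [ff] at hab
        have h6 := Nat.add_left_cancel hab
        exact Nat.eq_of_mul_eq_mul_left (Nat.pow_pos (by norm_num)) h6
    simpa using hinj
  · -- upper bound for N
    have h7 : N < 2^(Nat.log 2 N + 1) := Nat.lt_pow_succ_log_self (by norm_num) N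
    have h8 : (2:ℕ)^(Nat.log 2 N + 1) = 2^(2*e+7) * 2^(e+25+r) := by
      rw [← pow_add]
      congr 1
      omega
    omega

open scoped Classical in
private lemma posDensity (e : ℕ) : PosLowerDensity (AA e) := by
  rw [PosLowerDensity]
  have hc : (0:ℝ) < ((2:ℝ)^(2*e+7))⁻¹ := by positivity
  refine lt_of_lt_of_le hc (Filter.le_liminf_of_le ?_ ?_)
  · -- coboundedness: the sequence is eventually bounded above by 2
    refine Filter.isCoboundedUnder_ge_of_eventually_le atTop (x := 2) ?_
    filter_upwards [Filter.eventually_ge_atTop 1] with N hN1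
    have hcard : ((Finset.range (N+1)).filter (fun k => k ∈ AA e)).card ≤ N + 1 :=
      le_trans (Finset.card_filter_le _ _) (by simp)
    rw [div_le_iff₀ (by positivity : (0:ℝ) < (N:ℝ))]
    have : ((N:ℝ) + 1) ≤ 2 * N := by
      have : (1:ℝ) ≤ N := by exact_mod_cast hN1
      linarith
    calc (((Finset.range (N+1)).filter (fun k => k ∈ AA e)).card : ℝ)
        ≤ (N:ℝ) + 1 := by exact_mod_cast hcard
      _ ≤ 2 * N := this
  · -- eventual lower bound
    filter_upwards [Filter.eventually_ge_atTop (max 1 (2^(3*e+31)))] with N hN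
    have hN1 : 1 ≤ N := le_trans (le_max_left _ _) hN
    have hNe : 2^(3*e+31) ≤ N := le_trans (le_max_right _ _) hN
    obtain ⟨h1, h2⟩ := counting e N hNe
    rw [le_div_iff₀ (by positivity : (0:ℝ) < (N:ℝ))]
    have hNle : (N:ℝ) ≤ 2^(2*e+7) *
        (((Finset.range (N+1)).filter (fun k => k ∈ AA e)).card : ℝ) := by
      have h4 : (N:ℝ) < (2:ℝ)^(2*e+7) * (2:ℝ)^(e+25+(Nat.log 2 N - (3*e+31))) := by
        exact_mod_cast h2
      have h3 : (2:ℝ)^(e+25+(Nat.log 2 N - (3*e+31))) ≤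
          (((Finset.range (N+1)).filter (fun k => k ∈ AA e)).card : ℝ) := by
        exact_mod_cast h1
      exact h4.le.trans (mul_le_mul_of_nonneg_left h3 (by positivity))
    calc ((2:ℝ)^(2*e+7))⁻¹ * N
        ≤ ((2:ℝ)^(2*e+7))⁻¹ * (2^(2*e+7) *
            (((Finset.range (N+1)).filter (fun k => k ∈ AA e)).card : ℝ)) := by
          apply mul_le_mul_of_nonneg_left hNle (by positivity)
      _ = (((Finset.range (N+1)).filter (fun k => k ∈ AA e)).card : ℝ) := by
          rw [← mul_assoc, inv_mul_cancel₀ (by positivity), one_mul]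

private lemma mem_gt {e k : ℕ} (hk : k ∈ AA e) : e < k := by
  obtain ⟨r, t, ht, rfl⟩ := hk
  have := ff_lower e r t
  omega

/-- There is a family of pairwise disjoint subsets of `ℕ`, each of positive
lower density, with the separation properties of Bonilla–Grosse-Erdmann. -/
theorem exists_disjoint_posLowerDensity_family :
    ∃ A : ℕ → ℕ → Set ℕ,
      (∀ n m, PosLowerDensity (A n m)) ∧
      (∀ n m n' m', (n, m) ≠ (n', m') → A n m ∩ A n' m' = ∅) ∧
      (∀ n m n' m' : ℕ, ∀ k ∈ A n m, ∀ k' ∈ A n' m',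
        m < k ∧ (k ≠ k' → (m + m' : ℤ) < |(k : ℤ) - (k' : ℤ)|)) := by
  refine ⟨fun n m => AA (Nat.pair n m), fun n m => posDensity _, ?_, ?_⟩
  · intro n m n' m' hne
    apply AA_disjoint
    intro h
    rw [Nat.pair_eq_pair] at h
    exact hne (by simp [h.1, h.2])
  · intro n m n' m' k hk k' hk'
    have hm : m ≤ Nat.pair n m := Nat.right_le_pair n m
    have hm' : m' ≤ Nat.pair n' m' := Nat.right_le_pair n' m'
    constructor
    · have := mem_gt hk
      omega
    · intro hkk'
      obtain ⟨r, t, ht, rfl⟩ := hk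
      obtain ⟨r', t', ht', rfl⟩ := hk'
      have hsep := sep ht ht' (by exact_mod_cast hkk')
      rw [lt_abs]
      omega
end
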